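/- arXiv:1508.03858 — 6 statements merged into one kernel-verified Lean document; each statement's English description precedes it below -/
import Mathlib

section
/- Let r ≥ 2, σ ∈ Σ_r, M = M(σ), let x, y ∈ Int(M), and let m ≥ 1. If (P₁,…,P_m) ∈ (∂M)^m maximizes the total length |xP₁| + |P₁P₂| + ⋯ + |P_{m−1}P_m| + |P_m y| over all m-tuples of points of ∂M, then all consecutive points of the polygonal path x P₁ ⋯ P_m y are distinct and the path x P₁ ⋯ P_m y is a billiard path from x to y in M (i.e., the reflection law holds at each P_i). -/
noncomputable section

open Set

/-- Points of the plane. -/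
abbrev Pt : Type := EuclideanSpace ℝ (Fin 2)

/-- Rotation of a plane vector by +90 degrees (counterclockwise). -/
def rot90 (w : Pt) : Pt := (WithLp.equiv 2 (Fin 2 → ℝ)).symm ![-(w 1), w 0]

/-- A simple closed `C^r` curve in the plane with positive curvature, parametrized at
constant speed by `S¹ = ℝ/ℤ`, oriented counterclockwise.  Positive curvature together with
counterclockwise orientation is encoded by positivity of the cross product `σ' × σ''`. -/
structure ClosedCurve (r : ℕ) where
  toFun : ℝ → Pt
  contDiff : ContDiff ℝ r toFun
  periodic : Function.Periodic toFun 1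
  inj : ∀ ⦃s t : ℝ⦄, s ∈ Ico (0:ℝ) 1 → t ∈ Ico (0:ℝ) 1 → toFun s = toFun t → s = t
  constSpeed : ∃ c : ℝ, 0 < c ∧ ∀ s : ℝ, ‖deriv toFun s‖ = c
  posCurv : ∀ s : ℝ, 0 < deriv toFun s 0 * deriv (deriv toFun) s 1
      - deriv toFun s 1 * deriv (deriv toFun) s 0

namespace ClosedCurve

variable {r : ℕ}

/-- The boundary `∂M(σ)` of the billiard table: the image of the curve. -/
def boundary (σ : ClosedCurve r) : Set Pt := Set.range σ.toFun

/-- The billiard table `M(σ)`: the compact convex region bounded by `σ`. -/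
def table (σ : ClosedCurve r) : Set Pt := convexHull ℝ σ.boundary

/-- Unit tangent vector at parameter `s`. -/
def unitTangent (σ : ClosedCurve r) (s : ℝ) : Pt := ‖deriv σ.toFun s‖⁻¹ • deriv σ.toFun s

/-- Inward unit normal at parameter `s` (for a counterclockwise curve). -/
def inwardNormal (σ : ClosedCurve r) (s : ℝ) : Pt := rot90 (σ.unitTangent s)

/-- Curvature at parameter `s`. -/
def curvatureAt (σ : ClosedCurve r) (s : ℝ) : ℝ :=
  (deriv σ.toFun s 0 * deriv (deriv σ.toFun) s 1
    - deriv σ.toFun s 1 * deriv (deriv σ.toFun) s 0) / ‖deriv σ.toFun s‖ ^ 3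

end ClosedCurve

/-- The `C^k` distance `d_k` between two closed curves (given by constant-speed
parametrizations `f`, `g` of period 1): the infimum over basepoint shifts `c` of the
`C^k` distance on `[0,1]` between `t ↦ f (t + c)` and `g`. -/
def ckDist (k : ℕ) (f g : ℝ → Pt) : ℝ :=
  sInf {d : ℝ | ∃ c : ℝ, d = ⨆ j : Fin (k+1), ⨆ s : Icc (0:ℝ) 1,
    ‖iteratedDeriv (j : ℕ) (fun t => f (t + c)) (s : ℝ) - iteratedDeriv (j : ℕ) g (s : ℝ)‖}

/-- Unit vector pointing from `p` to `q`. -/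
def unitDir (p q : Pt) : Pt := ‖q - p‖⁻¹ • (q - p)

/-- Reflection of the vector `w` across the line spanned by `T`. -/
def reflectAcross (T w : Pt) : Pt := (2 * (inner ℝ w T : ℝ) / (inner ℝ T T : ℝ)) • T - w

/-- A billiard path from `x` to `y` in the table bounded by `σ`: a polygonal path
`x P₁ ⋯ P_m y` whose vertices lie on the boundary, whose segments lie in the table, and
which satisfies the reflection law at each vertex. -/
structure BilliardPath {r : ℕ} (σ : ClosedCurve r) (x y : Pt) where
  m : ℕ
  V : ℕ → Pt
  head_eq : V 0 = x
  last_eq : V (m + 1) = y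
  consec_ne : ∀ i ≤ m, V i ≠ V (i + 1)
  vertex_mem : ∀ i, 1 ≤ i → i ≤ m → V i ∈ σ.boundary
  seg_sub : ∀ i ≤ m, segment ℝ (V i) (V (i + 1)) ⊆ σ.table
  reflect : ∀ i, 1 ≤ i → i ≤ m → ∃ s : ℝ, σ.toFun s = V i ∧
    unitDir (V i) (V (i + 1)) = reflectAcross (deriv σ.toFun s) (unitDir (V (i - 1)) (V i))

namespace BilliardPath

variable {r : ℕ} {σ : ClosedCurve r} {x y : Pt}

/-- The `j`-th segment of a billiard path. -/
def seg (γ : BilliardPath σ x y) (j : ℕ) : Set Pt := segment ℝ (γ.V j) (γ.V (j + 1))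

/-- `p` is a vertex of the path `γ`. -/
def IsVertex (γ : BilliardPath σ x y) (p : Pt) : Prop := ∃ i, 1 ≤ i ∧ i ≤ γ.m ∧ γ.V i = p

end BilliardPath

/-- The `j`-th segment of a polygonal path with vertex sequence `V`. -/
def segOf (V : ℕ → Pt) (j : ℕ) : Set Pt := segment ℝ (V j) (V (j + 1))

/-- `n` polygonal paths from `x` to `y` (the `i`-th having `m i` interior vertices, with
vertex sequence `V i`) are in general position:
(GP1) no two paths share a vertex;
(GP2) no point occurs as a vertex on the same path more than once;
(GP3) no triple intersection points except `x` and `y`;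
(GP4) `x` and `y` are not interior points of any of the paths. -/
def GenPos (x y : Pt) {n : ℕ} (m : Fin n → ℕ) (V : Fin n → ℕ → Pt) : Prop :=
  (∀ i j : Fin n, i ≠ j → ∀ a b : ℕ, 1 ≤ a → a ≤ m i → 1 ≤ b → b ≤ m j → V i a ≠ V j b) ∧
  (∀ i : Fin n, ∀ a b : ℕ, 1 ≤ a → a ≤ m i → 1 ≤ b → b ≤ m i → V i a = V i b → a = b) ∧
  (¬ ∃ z : Pt, z ≠ x ∧ z ≠ y ∧ ∃ i₁ i₂ i₃ : Fin n, ∃ j₁ j₂ j₃ : ℕ,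
    j₁ ≤ m i₁ ∧ j₂ ≤ m i₂ ∧ j₃ ≤ m i₃ ∧
    segOf (V i₁) j₁ ≠ segOf (V i₂) j₂ ∧ segOf (V i₁) j₁ ≠ segOf (V i₃) j₃ ∧
    segOf (V i₂) j₂ ≠ segOf (V i₃) j₃ ∧
    z ∈ segOf (V i₁) j₁ ∧ z ∈ segOf (V i₂) j₂ ∧ z ∈ segOf (V i₃) j₃) ∧
  (∀ i : Fin n, ∀ j ≤ m i, (x ∈ segOf (V i) j → j = 0) ∧ (y ∈ segOf (V i) j → j = m i))

/-- The non-collinearity condition (NC): no two distinct vertices are collinear with `y`. -/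
def NonCollinearCond (y : Pt) {n : ℕ} (m : Fin n → ℕ) (V : Fin n → ℕ → Pt) : Prop :=
  ∀ (i₁ i₂ : Fin n) (j₁ j₂ : ℕ), 1 ≤ j₁ → j₁ ≤ m i₁ → 1 ≤ j₂ → j₂ ≤ m i₂ →
    V i₁ j₁ ≠ V i₂ j₂ → ¬ Collinear ℝ ({V i₁ j₁, V i₂ j₂, y} : Set Pt)

/-- `n` billiard paths are in general position. -/
def InGenPos {r n : ℕ} {σ : ClosedCurve r} {x y : Pt}
    (γ : Fin n → BilliardPath σ x y) : Prop :=
  GenPos x y (fun i => (γ i).m) (fun i => (γ i).V)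

/-- Distance between two polygonal paths with `m` interior vertices each. -/
def polyDist (m : ℕ) (V W : ℕ → Pt) : ℝ := ⨆ i : Fin (m + 2), dist (V (i : ℕ)) (W (i : ℕ))

/-- The pair `(x, y)` is secure in the table bounded by `σ`: some finite subset of
`M(σ) \ {x, y}` meets every billiard path from `x` to `y`. -/
def SecurePair {r : ℕ} (σ : ClosedCurve r) (x y : Pt) : Prop :=
  ∃ B : Finset Pt, (↑B : Set Pt) ⊆ σ.table \ {x, y} ∧
    ∀ γ : BilliardPath σ x y, ∃ p ∈ B, ∃ j ≤ γ.m, p ∈ γ.seg j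

/-- A `C^k` family of oriented lines `u ↦ {base u + t • dir u}`, `u ∈ [a, b]`. -/
structure LineFamily (k : ℕ) where
  a : ℝ
  b : ℝ
  lt : a < b
  base : ℝ → Pt
  dir : ℝ → Pt
  smooth_base : ContDiff ℝ k base
  smooth_dir : ContDiff ℝ k dir
  unit_dir : ∀ u : ℝ, ‖dir u‖ = 1

namespace LineFamily

variable {k : ℕ}

/-- The parameter interval of the family. -/
def I (F : LineFamily k) : Set ℝ := Icc F.a F.b

/-- Non-degeneracy: if `dir' u = 0` then `base' u` is not a scalar multiple of `dir u`. -/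
def Nondegenerate (F : LineFamily k) : Prop :=
  ∀ u ∈ F.I, deriv F.dir u = 0 → ∀ c : ℝ, deriv F.base u ≠ c • F.dir u

/-- The family focuses (in linear approximation) at the point `p` at parameter `u₀`. -/
def FocusesAt (F : LineFamily k) (u₀ : ℝ) (p : Pt) : Prop :=
  deriv F.dir u₀ ≠ 0 ∧
  p = F.base u₀ + (-((inner ℝ (deriv F.base u₀) (deriv F.dir u₀) : ℝ) /
    (inner ℝ (deriv F.dir u₀) (deriv F.dir u₀) : ℝ))) • F.dir u₀

end LineFamily

/-- `G` is the family of oriented lines obtained by reflecting the family `F` from the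
curve `σ`: the base point of `G` is the last boundary point hit along each line of `F`,
and the direction is reflected there. -/
def IsReflectionOf {r k : ℕ} (σ : ClosedCurve r) (F G : LineFamily k) : Prop :=
  G.a = F.a ∧ G.b = F.b ∧
  ∀ u ∈ F.I, ∃ t : ℝ,
    G.base u = F.base u + t • F.dir u ∧
    G.base u ∈ σ.boundary ∧
    (∀ t' : ℝ, F.base u + t' • F.dir u ∈ σ.boundary → t' ≤ t) ∧
    ∃ s : ℝ, σ.toFun s = G.base u ∧
      G.dir u = F.dir u - (2 * (inner ℝ (σ.inwardNormal s) (F.dir u) : ℝ)) • σ.inwardNormal s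

/-- The endpoints of the billiard path `τ` (from `p` to `q`, with `τ.m` reflections)
are conjugate along `τ` in the table bounded by `σ`. -/
def ConjugateAlong {r : ℕ} (σ : ClosedCurve r) {p q : Pt} (τ : BilliardPath σ p q) : Prop :=
  ∃ (F : ℕ → LineFamily 1) (u₀ : ℝ),
    u₀ ∈ (F 0).I ∧ (F 0).Nondegenerate ∧
    (F 0).dir u₀ = unitDir p (τ.V 1) ∧
    (∃ t : ℝ, (F 0).base u₀ = p + t • unitDir p (τ.V 1)) ∧
    (∀ i < τ.m, IsReflectionOf σ (F i) (F (i + 1))) ∧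
    (F 0).FocusesAt u₀ p ∧ (F τ.m).FocusesAt u₀ q

/-- The `C^k` distance `d_k` between two parametrized families of lines on `[a,b]`. -/
def famCkDist (k : ℕ) (a b : ℝ) (f g f' g' : ℝ → Pt) : ℝ :=
  max (⨆ j : Fin (k+1), ⨆ s : Icc a b,
        ‖iteratedDeriv (j : ℕ) f (s : ℝ) - iteratedDeriv (j : ℕ) f' (s : ℝ)‖)
      (⨆ j : Fin (k+1), ⨆ s : Icc a b,
        ‖iteratedDeriv (j : ℕ) g (s : ℝ) - iteratedDeriv (j : ℕ) g' (s : ℝ)‖)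

/-- `U` is an open subset of `S` in the `C^k` topology induced by the metric `d_k`. -/
def OpenIn {r : ℕ} (k : ℕ) (S U : Set (ClosedCurve r)) : Prop :=
  U ⊆ S ∧ ∀ σ ∈ U, ∃ ε > 0, ∀ τ ∈ S, ckDist k σ.toFun τ.toFun < ε → τ ∈ U

/-- `U` is a dense subset of `S` in the `C^k` topology induced by the metric `d_k`. -/
def DenseIn {r : ℕ} (k : ℕ) (S U : Set (ClosedCurve r)) : Prop :=
  ∀ σ ∈ S, ∀ ε > 0, ∃ τ ∈ U, ckDist k σ.toFun τ.toFun < ε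

/-- `A` is a dense `G_δ` subset of `S` in the `C^k` topology: a dense countable
intersection of open dense subsets of `S`. -/
def DenseGdeltaIn {r : ℕ} (k : ℕ) (S A : Set (ClosedCurve r)) : Prop :=
  (∃ U : ℕ → Set (ClosedCurve r), (∀ i, OpenIn k S (U i) ∧ DenseIn k S (U i)) ∧
    A = ⋂ i, U i) ∧ DenseIn k S A

/-- `C¹` distance between maps on a compact set `K ⊆ ℝ²`. -/
def c1DistOn (K : Set Pt) (f g : Pt → Pt) : ℝ :=
  max (⨆ s : K, ‖f (s : Pt) - g (s : Pt)‖)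
      (⨆ s : K, ‖fderivWithin ℝ f K (s : Pt) - fderivWithin ℝ g K (s : Pt)‖)



section AuxBilliard

open scoped RealInnerProductSpace

private lemma Pt.ext2 {v w : Pt} (h0 : v 0 = w 0) (h1 : v 1 = w 1) : v = w := by
  apply PiLp.ext; intro i; fin_cases i <;> assumption

private lemma inner_coords (x y : Pt) : ⟪x, y⟫ = x 0 * y 0 + x 1 * y 1 := by
  simp [PiLp.inner_apply, Fin.sum_univ_two, RCLike.inner_apply, conj_trivial]; ring

private lemma inner_sq_add (T w : Pt) : ⟪w,T⟫^2 + ⟪w, rot90 T⟫^2 = ⟪T,T⟫ * ⟪w,w⟫ := by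
  rw [inner_coords, inner_coords, inner_coords, inner_coords]; simp [rot90]; ring

private lemma inner_rot_self (T : Pt) : ⟪T, rot90 T⟫ = 0 := by
  simp [inner_coords, rot90]; ring

private lemma inner_eq_ext {T v w : Pt} (hT : T ≠ 0)
    (h1 : ⟪v, T⟫ = ⟪w, T⟫) (h2 : ⟪v, rot90 T⟫ = ⟪w, rot90 T⟫) : v = w := by
  have hTT : T 0 * T 0 + T 1 * T 1 ≠ 0 := by
    intro h
    have h0 : T 0 = 0 := by nlinarith [sq_nonneg (T 0), sq_nonneg (T 1)]
    have h1' : T 1 = 0 := by nlinarith [sq_nonneg (T 0), sq_nonneg (T 1)]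
    exact hT (Pt.ext2 (by simpa using h0) (by simpa using h1'))
  rw [inner_coords, inner_coords] at h1 h2
  have hr0 : rot90 T 0 = -(T 1) := by simp [rot90]
  have hr1 : rot90 T 1 = T 0 := by simp [rot90]
  rw [hr0, hr1] at h2
  have e0 : (v 0 - w 0) * (T 0 * T 0 + T 1 * T 1) = 0 := by linear_combination T 0 * h1 - T 1 * h2
  have e1 : (v 1 - w 1) * (T 0 * T 0 + T 1 * T 1) = 0 := by linear_combination T 1 * h1 + T 0 * h2
  have g0 : v 0 = w 0 := by
    rcases mul_eq_zero.mp e0 with h | h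
    · linarith
    · exact absurd h hTT
  have g1 : v 1 = w 1 := by
    rcases mul_eq_zero.mp e1 with h | h
    · linarith
    · exact absurd h hTT
  exact Pt.ext2 g0 g1

private lemma hasDerivAt_norm_sub {f : ℝ → Pt} {T : Pt} (A : Pt) {s : ℝ} (hf : HasDerivAt f T s)
    (hA : f s ≠ A) : HasDerivAt (fun t => ‖f t - A‖) (⟪f s - A, T⟫ / ‖f s - A‖) s := by
  have hne : f s - A ≠ 0 := sub_ne_zero.mpr hA
  have h1 : HasDerivAt (fun t => f t - A) T s := hf.sub_const A
  have h2 : HasDerivAt (fun t => ‖f t - A‖ ^ 2) (2 * ⟪f s - A, T⟫) s := h1.norm_sq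
  have hsq : ‖f s - A‖ ^ 2 ≠ 0 := pow_ne_zero _ (norm_ne_zero_iff.mpr hne)
  have h3 := (Real.hasDerivAt_sqrt hsq).comp s h2
  have heq : (fun t => Real.sqrt (‖f t - A‖ ^ 2)) = fun t => ‖f t - A‖ := by
    funext t; rw [Real.sqrt_sq (norm_nonneg _)]
  rw [Function.comp_def, heq] at h3
  refine h3.congr_deriv ?_
  rw [Real.sqrt_sq (norm_nonneg _)]
  field_simp

private lemma curve_not_in_segment {r : ℕ} (σ : ClosedCurve r) (A B : Pt)
    (h : ∀ t : ℝ, σ.toFun t ∈ segment ℝ A B) : False := by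
  have hcont : Continuous σ.toFun := σ.contDiff.continuous
  by_cases hAB : A = B
  · subst hAB
    have h0 := h 0
    have h2 := h 2⁻¹
    rw [segment_same] at h0 h2
    have : (0:ℝ) = 2⁻¹ :=
      σ.inj (by constructor <;> norm_num) (by constructor <;> norm_num) (h0.trans h2.symm)
    norm_num at this
  · set φ : ℝ → ℝ := fun t => ⟪σ.toFun t - A, B - A⟫ with hφ
    have hφc : Continuous φ := (hcont.sub continuous_const).inner continuous_const
    have hdet : ∀ t u : ℝ, φ t = φ u → σ.toFun t = σ.toFun u := by
      intro t u htu
      obtain ⟨a, b, ha, hb, hab, hq⟩ := h t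
      obtain ⟨a', b', ha', hb', hab', hq'⟩ := h u
      have h1 : σ.toFun t - A = b • (B - A) := by
        rw [← hq]
        have hae : a = 1 - b := by linarith
        rw [hae]; module
      have h2 : σ.toFun u - A = b' • (B - A) := by
        rw [← hq']
        have hae : a' = 1 - b' := by linarith
        rw [hae]; module
      have hn : ⟪B - A, B - A⟫ ≠ 0 :=
        inner_self_ne_zero.mpr (sub_ne_zero.mpr (Ne.symm hAB))
      have hb1 : φ t = b * ⟪B - A, B - A⟫ := by
        rw [hφ]; simp only; rw [h1, real_inner_smul_left]
      have hb2 : φ u = b' * ⟪B - A, B - A⟫ := by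
        rw [hφ]; simp only; rw [h2, real_inner_smul_left]
      have hbb : b = b' := by
        rw [hb1, hb2] at htu; exact mul_right_cancel₀ hn htu
      have : σ.toFun t - A = σ.toFun u - A := by rw [h1, h2, hbb]
      exact sub_left_injective this
    have hinj : ∀ t u : ℝ, t ∈ Ico (0:ℝ) 1 → u ∈ Ico (0:ℝ) 1 → φ t = φ u → t = u :=
      fun t u ht hu he => σ.inj ht hu (hdet t u he)
    have hper : φ 1 = φ 0 := by
      have : σ.toFun 1 = σ.toFun 0 := by simpa using σ.periodic 0
      rw [hφ]; simp only [this]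
    by_cases hc : ∀ c ∈ Ioo (0:ℝ) 1, φ c = φ 0
    · have e1 := hc (1/3) (by norm_num)
      have e2 := hc (2/3) (by norm_num)
      have : (1/3 : ℝ) = 2/3 :=
        hinj _ _ (by constructor <;> norm_num) (by constructor <;> norm_num) (e1.trans e2.symm)
      norm_num at this
    · push_neg at hc
      obtain ⟨c, hc01, hcne⟩ := hc
      rcases Ne.lt_or_gt hcne with hlt | hlt
      · -- φ c < φ 0
        set v := (φ c + φ 0) / 2 with hv
        have hv1 : v ∈ Ioo (φ c) (φ 0) := by constructor <;> (rw [hv]; linarith)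
        obtain ⟨t₁, ht₁, hφt₁⟩ :=
          intermediate_value_Ioo' (le_of_lt hc01.1) hφc.continuousOn hv1
        have hv2 : v ∈ Ioo (φ c) (φ 1) := by rw [hper]; exact hv1
        obtain ⟨t₂, ht₂, hφt₂⟩ :=
          intermediate_value_Ioo (le_of_lt hc01.2) hφc.continuousOn hv2
        have heq : t₁ = t₂ :=
          hinj _ _ ⟨le_of_lt ht₁.1, lt_trans ht₁.2 hc01.2⟩
            ⟨le_of_lt (lt_trans hc01.1 ht₂.1), ht₂.2⟩ (hφt₁.trans hφt₂.symm)
        have hltt : t₁ < t₂ := lt_trans ht₁.2 ht₂.1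
        rw [heq] at hltt; exact lt_irrefl _ hltt
      · -- φ 0 < φ c
        set v := (φ 0 + φ c) / 2 with hv
        have hv1 : v ∈ Ioo (φ 0) (φ c) := by constructor <;> (rw [hv]; linarith)
        obtain ⟨t₁, ht₁, hφt₁⟩ :=
          intermediate_value_Ioo (le_of_lt hc01.1) hφc.continuousOn hv1
        have hv2 : v ∈ Ioo (φ 1) (φ c) := by rw [hper]; exact hv1
        obtain ⟨t₂, ht₂, hφt₂⟩ :=
          intermediate_value_Ioo' (le_of_lt hc01.2) hφc.continuousOn hv2
        have heq : t₁ = t₂ :=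
          hinj _ _ ⟨le_of_lt ht₁.1, lt_trans ht₁.2 hc01.2⟩
            ⟨le_of_lt (lt_trans hc01.1 ht₂.1), ht₂.2⟩ (hφt₁.trans hφt₂.symm)
        have hltt : t₁ < t₂ := lt_trans ht₁.2 ht₂.1
        rw [heq] at hltt; exact lt_irrefl _ hltt

end AuxBilliard

open scoped RealInnerProductSpace in
/-- maximal length polygonal paths are billiard paths. If
`(P₁, …, P_m) ∈ (∂M)^m` maximizes the total length of the polygonal path `x P₁ ⋯ P_m y`
over all `m`-tuples of boundary points, then all consecutive points are distinct and the
path is a billiard path from `x` to `y`. -/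
theorem maximal_length_is_billiard
    (r : ℕ) (hr : 2 ≤ r) (σ : ClosedCurve r) (x y : Pt)
    (hx : x ∈ interior σ.table) (hy : y ∈ interior σ.table)
    (m : ℕ) (hm : 1 ≤ m) (P : ℕ → Pt)
    (hP0 : P 0 = x) (hPm : P (m + 1) = y)
    (hPbd : ∀ i, 1 ≤ i → i ≤ m → P i ∈ σ.boundary)
    (hmax : ∀ Q : ℕ → Pt, Q 0 = x → Q (m + 1) = y → (∀ i, 1 ≤ i → i ≤ m → Q i ∈ σ.boundary) →
      ∑ i ∈ Finset.range (m + 1), dist (Q i) (Q (i + 1)) ≤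
        ∑ i ∈ Finset.range (m + 1), dist (P i) (P (i + 1))) :
    (∀ i ≤ m, P i ≠ P (i + 1)) ∧
    ∃ γ : BilliardPath σ x y, γ.m = m ∧ ∀ i ≤ m + 1, γ.V i = P i := by
  classical
  obtain ⟨c, hc, hcs⟩ := σ.constSpeed
  have hdiff : Differentiable ℝ σ.toFun :=
    σ.contDiff.differentiable (by exact_mod_cast (by omega : r ≠ 0))
  -- key variational inequality
  have key : ∀ j, 1 ≤ j → j ≤ m → ∀ z ∈ σ.boundary,
      dist (P (j-1)) z + dist z (P (j+1)) ≤ dist (P (j-1)) (P j) + dist (P j) (P (j+1)) := by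
    intro j hj1 hjm z hz
    set Q : ℕ → Pt := Function.update P j z with hQ
    have hQ0 : Q 0 = x := by rw [hQ, Function.update_of_ne (by omega), hP0]
    have hQm : Q (m+1) = y := by rw [hQ, Function.update_of_ne (by omega), hPm]
    have hQbd : ∀ i, 1 ≤ i → i ≤ m → Q i ∈ σ.boundary := by
      intro i h1 h2
      by_cases hij : i = j
      · rw [hQ, hij, Function.update_self]; exact hz
      · rw [hQ, Function.update_of_ne hij]; exact hPbd i h1 h2
    have hsum := hmax Q hQ0 hQm hQbd
    have hj1m : j - 1 ∈ Finset.range (m+1) := by simp only [Finset.mem_range]; omega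
    have hjmem : j ∈ (Finset.range (m+1)).erase (j-1) := by
      simp only [Finset.mem_erase, Finset.mem_range]; omega
    have hsub : j - 1 + 1 = j := by omega
    have decomp : ∀ R : ℕ → Pt,
        ∑ i ∈ Finset.range (m+1), dist (R i) (R (i+1)) =
        dist (R (j-1)) (R j) + (dist (R j) (R (j+1)) +
          ∑ i ∈ ((Finset.range (m+1)).erase (j-1)).erase j, dist (R i) (R (i+1))) := by
      intro R
      rw [← Finset.add_sum_erase _ _ hj1m, ← Finset.add_sum_erase _ _ hjmem, hsub]
    rw [decomp Q, decomp P] at hsum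
    have hrest : ∑ i ∈ ((Finset.range (m+1)).erase (j-1)).erase j, dist (Q i) (Q (i+1)) =
        ∑ i ∈ ((Finset.range (m+1)).erase (j-1)).erase j, dist (P i) (P (i+1)) := by
      apply Finset.sum_congr rfl
      intro i hi
      have hi1 : i ≠ j := (Finset.mem_erase.mp hi).1
      have hi2 : i ≠ j - 1 := (Finset.mem_erase.mp (Finset.mem_erase.mp hi).2).1
      have hi3 : i + 1 ≠ j := by omega
      rw [hQ, Function.update_of_ne hi1, Function.update_of_ne hi3]
    have hQj1 : Q (j-1) = P (j-1) := by rw [hQ, Function.update_of_ne (by omega)]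
    have hQj : Q j = z := by rw [hQ, Function.update_self]
    have hQjp : Q (j+1) = P (j+1) := by rw [hQ, Function.update_of_ne (by omega)]
    rw [hrest, hQj1, hQj, hQjp] at hsum
    linarith
  -- collapse: degenerate triangle equality is impossible
  have hcollapse : ∀ j, 1 ≤ j → j ≤ m →
      dist (P (j-1)) (P j) + dist (P j) (P (j+1)) = dist (P (j-1)) (P (j+1)) → False := by
    intro j h1 h2 heq
    apply curve_not_in_segment σ (P (j-1)) (P (j+1))
    intro t
    have hk := key j h1 h2 (σ.toFun t) ⟨t, rfl⟩
    rw [heq] at hk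
    have htri := dist_triangle (P (j-1)) (σ.toFun t) (P (j+1))
    have heq2 : dist (P (j-1)) (σ.toFun t) + dist (σ.toFun t) (P (j+1))
        = dist (P (j-1)) (P (j+1)) := le_antisymm hk htri
    exact mem_segment_iff_wbtw.mpr (dist_add_dist_eq_iff.mp heq2)
  -- consecutive points are distinct
  have hne : ∀ i ≤ m, P i ≠ P (i+1) := by
    intro i him h
    rcases Nat.eq_zero_or_pos i with rfl | h1
    · apply hcollapse 1 le_rfl hm
      show dist (P 0) (P 1) + dist (P 1) (P 2) = dist (P 0) (P 2)
      rw [← h]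
      simp [dist_self]
    · apply hcollapse i h1 him
      rw [h]
      simp [dist_self]
  -- membership in the table
  have hmemT : ∀ k, k ≤ m + 1 → P k ∈ σ.table := by
    intro k hk
    by_cases hk0 : k = 0
    · rw [hk0, hP0]; exact interior_subset hx
    by_cases hkm : k = m + 1
    · rw [hkm, hPm]; exact interior_subset hy
    · exact subset_convexHull ℝ _ (hPbd k (by omega) (by omega))
  -- the reflection law
  have hrefl : ∀ i, 1 ≤ i → i ≤ m → ∃ s : ℝ, σ.toFun s = P i ∧
      unitDir (P i) (P (i+1)) = reflectAcross (deriv σ.toFun s) (unitDir (P (i-1)) (P i)) := by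
    intro i hi1 him
    obtain ⟨s, hs⟩ := hPbd i hi1 him
    refine ⟨s, hs, ?_⟩
    set A := P (i-1) with hAdef
    set B := P (i+1) with hBdef
    set T := deriv σ.toFun s with hTdef
    have hTnorm : ‖T‖ = c := hcs s
    have hT0 : T ≠ 0 := by
      intro h0
      rw [h0, norm_zero] at hTnorm
      exact absurd hTnorm.symm (ne_of_gt hc)
    have hAne : A ≠ P i := by
      have h' := hne (i-1) (by omega)
      rwa [Nat.sub_add_cancel hi1] at h'
    have hBne : P i ≠ B := hne i him
    have hPA0 : P i - A ≠ 0 := sub_ne_zero.mpr (Ne.symm hAne)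
    have hBP0 : B - P i ≠ 0 := sub_ne_zero.mpr (Ne.symm hBne)
    have hd : HasDerivAt σ.toFun T s := (hdiff s).hasDerivAt
    have hdA : HasDerivAt (fun t => ‖σ.toFun t - A‖) (⟪σ.toFun s - A, T⟫ / ‖σ.toFun s - A‖) s :=
      hasDerivAt_norm_sub A hd (by rw [hs]; exact Ne.symm hAne)
    have hdB : HasDerivAt (fun t => ‖σ.toFun t - B‖) (⟪σ.toFun s - B, T⟫ / ‖σ.toFun s - B‖) s :=
      hasDerivAt_norm_sub B hd (by rw [hs]; exact hBne)
    have hg : HasDerivAt (fun t => ‖σ.toFun t - A‖ + ‖σ.toFun t - B‖)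
        (⟪σ.toFun s - A, T⟫ / ‖σ.toFun s - A‖ + ⟪σ.toFun s - B, T⟫ / ‖σ.toFun s - B‖) s :=
      hdA.add hdB
    have hlocmax : IsLocalMax (fun t => ‖σ.toFun t - A‖ + ‖σ.toFun t - B‖) s := by
      apply Filter.Eventually.of_forall
      intro t
      have hk := key i hi1 him (σ.toFun t) ⟨t, rfl⟩
      calc ‖σ.toFun t - A‖ + ‖σ.toFun t - B‖
          = dist A (σ.toFun t) + dist (σ.toFun t) B := by rw [dist_eq_norm', dist_eq_norm]
        _ ≤ dist A (P i) + dist (P i) B := hk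
        _ = ‖σ.toFun s - A‖ + ‖σ.toFun s - B‖ := by rw [hs, dist_eq_norm', dist_eq_norm]
    have hD0 := hlocmax.hasDerivAt_eq_zero hg
    rw [hs] at hD0
    set u₁ := unitDir A (P i) with hu1def
    set u₂ := unitDir (P i) B with hu2def
    have hu1T : ⟪u₁, T⟫ = ⟪P i - A, T⟫ / ‖P i - A‖ := by
      rw [hu1def, unitDir, real_inner_smul_left]; field_simp
    have hu2T : ⟪u₂, T⟫ = ⟪B - P i, T⟫ / ‖B - P i‖ := by
      rw [hu2def, unitDir, real_inner_smul_left]; field_simp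
    have hTeq : ⟪u₁, T⟫ = ⟪u₂, T⟫ := by
      have hnegn : P i - B = -(B - P i) := (neg_sub _ _).symm
      rw [hnegn, inner_neg_left, norm_neg, neg_div] at hD0
      rw [hu1T, hu2T]
      linarith
    have hu1norm : ‖u₁‖ = 1 := by
      rw [hu1def, unitDir, norm_smul, norm_inv, norm_norm,
        inv_mul_cancel₀ (norm_ne_zero_iff.mpr hPA0)]
    have hu2norm : ‖u₂‖ = 1 := by
      rw [hu2def, unitDir, norm_smul, norm_inv, norm_norm,
        inv_mul_cancel₀ (norm_ne_zero_iff.mpr hBP0)]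
    have hu1self : ⟪u₁, u₁⟫ = 1 := by
      rw [real_inner_self_eq_norm_mul_norm, hu1norm]; norm_num
    have hu2self : ⟪u₂, u₂⟫ = 1 := by
      rw [real_inner_self_eq_norm_mul_norm, hu2norm]; norm_num
    have hsq1 := inner_sq_add T u₁
    have hsq2 := inner_sq_add T u₂
    rw [hu1self] at hsq1
    rw [hu2self] at hsq2
    have hfac : (⟪u₂, rot90 T⟫ - ⟪u₁, rot90 T⟫) * (⟪u₂, rot90 T⟫ + ⟪u₁, rot90 T⟫) = 0 := by
      have h2 : ⟪u₂, rot90 T⟫^2 = ⟪u₁, rot90 T⟫^2 := by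
        rw [← hTeq] at hsq2
        linear_combination hsq2 - hsq1
      linear_combination h2
    have hTT : ⟪T, T⟫ ≠ 0 := inner_self_ne_zero.mpr hT0
    rcases mul_eq_zero.mp hfac with hcase | hcase
    · -- u₂ = u₁ : straight through, impossible
      exfalso
      have hu21 : u₂ = u₁ := inner_eq_ext hT0 hTeq.symm (by linarith)
      have hPA : P i - A = ‖P i - A‖ • u₁ := by
        rw [hu1def, unitDir, smul_inv_smul₀ (norm_ne_zero_iff.mpr hPA0)]
      have hBP : B - P i = ‖B - P i‖ • u₁ := by
        rw [← hu21, hu2def, unitDir, smul_inv_smul₀ (norm_ne_zero_iff.mpr hBP0)]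
      have hBA : B - A = (‖P i - A‖ + ‖B - P i‖) • u₁ := by
        rw [add_smul, ← hPA, ← hBP]; abel
      have hdistAB : dist A (P i) + dist (P i) B = dist A B := by
        simp only [dist_eq_norm']
        rw [hBA, norm_smul, hu1norm, mul_one, Real.norm_eq_abs,
          abs_of_nonneg (by positivity)]
      exact hcollapse i hi1 him hdistAB
    · -- reflection case
      apply inner_eq_ext hT0
      · show ⟪u₂, T⟫ = ⟪reflectAcross T u₁, T⟫
        have hre : ⟪reflectAcross T u₁, T⟫ = ⟪u₁, T⟫ := by
          rw [reflectAcross, inner_sub_left, real_inner_smul_left, div_mul_cancel₀ _ hTT]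
          ring
        rw [hre]
        exact hTeq.symm
      · show ⟪u₂, rot90 T⟫ = ⟪reflectAcross T u₁, rot90 T⟫
        rw [reflectAcross, inner_sub_left, real_inner_smul_left, inner_rot_self]
        linarith
  refine ⟨hne, ⟨⟨m, P, hP0, hPm, hne, hPbd, ?_, hrefl⟩, rfl, fun i _ => rfl⟩⟩
  intro i hi
  have h1 : P i ∈ σ.table := hmemT i (by omega)
  have h2 : P (i+1) ∈ σ.table := hmemT (i+1) (by omega)
  exact (convex_convexHull ℝ σ.boundary).segment_subset h1 h2


end
end

section
/- Let σ : S¹ → ℝ² be a C¹ constant-speed parametrization of a simple closed curve bounding a compact region M, let A, B ∈ M, and suppose Z = σ(s₀) maximizes the function Z' ↦ |AZ'| + |Z'B| over all points Z' on the curve, with A ≠ Z and B ≠ Z. Then ⟨(Z − A)/|Z − A| + (Z − B)/|Z − B|, σ'(s₀)⟩ = 0; equivalently, the segments AZ and ZB make equal angles with the tangent line to σ at Z, so that the path A Z B satisfies the billiard reflection law at Z. -/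
noncomputable section

open Set

lemma hasDerivAt_norm_comp' {f : ℝ → Pt} {f' : Pt} {x : ℝ}
    (hf : HasDerivAt f f' x) (h0 : f x ≠ 0) :
    HasDerivAt (fun s => ‖f s‖) (inner ℝ (‖f x‖⁻¹ • f x) f' : ℝ) x := by
  have hsq : HasDerivAt (fun s => ‖f s‖ ^ 2) (2 * (inner ℝ (f x) f' : ℝ)) x := hf.norm_sq
  have hne : ‖f x‖ ^ 2 ≠ 0 := pow_ne_zero _ (norm_ne_zero_iff.2 h0)
  have h := hsq.sqrt hne
  have heq : (fun s => Real.sqrt (‖f s‖ ^ 2)) = fun s => ‖f s‖ := by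
    funext s; exact Real.sqrt_sq (norm_nonneg _)
  rw [heq] at h
  convert h using 1
  rw [Real.sqrt_sq (norm_nonneg _), real_inner_smul_left]
  field_simp

/-- If `Z = σ s₀` maximizes `Z' ↦ |AZ'| + |Z'B|` over a `C¹`
constant-speed simple closed curve bounding a compact region `M` containing `A` and `B`,
and `A ≠ Z ≠ B`, then `⟨(Z−A)/|Z−A| + (Z−B)/|Z−B|, σ'(s₀)⟩ = 0`, i.e. the path `A Z B`
satisfies the billiard reflection law at `Z`. -/
theorem maximizer_reflects
    (σ : ℝ → Pt) (hσ : ContDiff ℝ 1 σ) (hper : Function.Periodic σ 1)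
    (hinj : ∀ ⦃s t : ℝ⦄, s ∈ Set.Ico (0:ℝ) 1 → t ∈ Set.Ico (0:ℝ) 1 → σ s = σ t → s = t)
    (c : ℝ) (hc : 0 < c) (hspeed : ∀ s : ℝ, ‖deriv σ s‖ = c)
    (M : Set Pt) (hM : IsCompact M) (hbd : frontier M = Set.range σ)
    (A B : Pt) (hA : A ∈ M) (hB : B ∈ M) (s₀ : ℝ)
    (hmax : ∀ s : ℝ, dist A (σ s) + dist (σ s) B ≤ dist A (σ s₀) + dist (σ s₀) B)
    (hAZ : A ≠ σ s₀) (hBZ : B ≠ σ s₀) :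
    (inner ℝ (‖σ s₀ - A‖⁻¹ • (σ s₀ - A) + ‖σ s₀ - B‖⁻¹ • (σ s₀ - B)) (deriv σ s₀) : ℝ) = 0 := by
  have hσd : HasDerivAt σ (deriv σ s₀) s₀ :=
    ((hσ.differentiable one_ne_zero) s₀).hasDerivAt
  have hA0 : σ s₀ - A ≠ 0 := sub_ne_zero.2 (Ne.symm hAZ)
  have hB0 : σ s₀ - B ≠ 0 := sub_ne_zero.2 (Ne.symm hBZ)
  have h1 : HasDerivAt (fun s => ‖σ s - A‖)
      (inner ℝ (‖σ s₀ - A‖⁻¹ • (σ s₀ - A)) (deriv σ s₀) : ℝ) s₀ :=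
    hasDerivAt_norm_comp' (by simpa using hσd.sub_const A) hA0
  have h2 : HasDerivAt (fun s => ‖σ s - B‖)
      (inner ℝ (‖σ s₀ - B‖⁻¹ • (σ s₀ - B)) (deriv σ s₀) : ℝ) s₀ :=
    hasDerivAt_norm_comp' (by simpa using hσd.sub_const B) hB0
  have hsum := h1.add h2
  have hloc : IsLocalMax (fun s => ‖σ s - A‖ + ‖σ s - B‖) s₀ := by
    apply Filter.Eventually.of_forall
    intro s
    have := hmax s
    simpa [dist_eq_norm, norm_sub_rev (σ s) A, norm_sub_rev (σ s₀) A] using this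
  have hzero := hloc.hasDerivAt_eq_zero hsum
  rw [inner_add_left]
  exact hzero

end
end

section
/- Suppose ℓ(u), u ∈ I, is a non-degenerate C¹ family of lines parametrized by ℓ(u,t) = ξ(u) + t v(u), t ∈ ℝ. For (u₀,t₀) ∈ I × ℝ, the derivative Dℓ(u₀,t₀) — the linear map ℝ² → ℝ² given by the matrix with columns ξ'(u₀) + t₀ v'(u₀) and v(u₀) — is invertible if and only if ℓ(u₀,t₀) is not a focusing point at u = u₀ (that is, if and only if it is not the case that v'(u₀) ≠ 0 and t₀ = −⟨ξ'(u₀), v'(u₀)⟩/⟨v'(u₀), v'(u₀)⟩). -/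
noncomputable section

open Set

/-- For a non-degenerate `C¹` family of lines `ℓ(u,t) = ξ(u) + t v(u)`,
the derivative `Dℓ(u₀,t₀)` (the matrix with columns `ξ'(u₀) + t₀ v'(u₀)` and `v(u₀)`) is
invertible iff `ℓ(u₀,t₀)` is not a focusing point at `u = u₀`. -/
theorem invertible_iff_not_focusing
    (F : LineFamily 1) (hnd : F.Nondegenerate) (u₀ : ℝ) (hu₀ : u₀ ∈ F.I) (t₀ : ℝ) :
    IsUnit (!![(deriv F.base u₀ + t₀ • deriv F.dir u₀) 0, F.dir u₀ 0;
               (deriv F.base u₀ + t₀ • deriv F.dir u₀) 1, F.dir u₀ 1]) ↔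
    ¬ (deriv F.dir u₀ ≠ 0 ∧
        t₀ = -((inner ℝ (deriv F.base u₀) (deriv F.dir u₀) : ℝ) /
          (inner ℝ (deriv F.dir u₀) (deriv F.dir u₀) : ℝ))) := by
  set ξ' := deriv F.base u₀ with hξ'def
  set v := F.dir u₀ with hvdef
  set w := deriv F.dir u₀ with hwdef
  -- components and basic identities
  have hdirdiff : ∀ u : ℝ, DifferentiableAt ℝ F.dir u := fun u =>
    (F.smooth_dir.differentiable (by simp)).differentiableAt
  have hcomp : ∀ (i : Fin 2), HasDerivAt (fun u => F.dir u i) (w i) u₀ := by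
    intro i
    exact (EuclideanSpace.proj i).hasFDerivAt.comp_hasDerivAt u₀
      ((hdirdiff u₀).hasDerivAt)
  have hnormsq : ∀ u : ℝ, (F.dir u 0) ^ 2 + (F.dir u 1) ^ 2 = 1 := by
    intro u
    have h := F.unit_dir u
    have h2 : ‖F.dir u‖ ^ 2 = 1 := by rw [h]; norm_num
    rw [EuclideanSpace.norm_eq] at h2
    rw [← h2, Real.sq_sqrt (by positivity)]
    simp [Fin.sum_univ_two, sq]
  have hvnorm : v 0 ^ 2 + v 1 ^ 2 = 1 := hnormsq u₀
  have horth : v 0 * w 0 + v 1 * w 1 = 0 := by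
    have hg : HasDerivAt (fun u => (F.dir u 0) ^ 2 + (F.dir u 1) ^ 2)
        (2 * v 0 * w 0 + 2 * v 1 * w 1) u₀ := by
      have h0 := ((hcomp 0).pow 2)
      have h1 := ((hcomp 1).pow 2)
      have := h0.add h1
      refine this.congr_deriv ?_
      push_cast
      norm_num
      rfl
    have hg' : HasDerivAt (fun _ : ℝ => (1 : ℝ))
        (2 * v 0 * w 0 + 2 * v 1 * w 1) u₀ := by
      apply hg.congr_of_eventuallyEq
      filter_upwards with u using (hnormsq u).symm
    have := hg'.deriv
    rw [deriv_const] at this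
    linarith
  have hinnerξw : (inner ℝ ξ' w : ℝ) = ξ' 0 * w 0 + ξ' 1 * w 1 := by
    simp [PiLp.inner_apply, Fin.sum_univ_two, RCLike.inner_apply, mul_comm]
  have hinnerww : (inner ℝ w w : ℝ) = w 0 * w 0 + w 1 * w 1 := by
    rw [PiLp.inner_apply]; simp [Fin.sum_univ_two, RCLike.inner_apply, sq]
  rw [Matrix.isUnit_iff_isUnit_det, Matrix.det_fin_two_of, isUnit_iff_ne_zero]
  have haddapp : ∀ i : Fin 2, (ξ' + t₀ • w) i = ξ' i + t₀ * w i := by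
    intro i; rfl
  rw [haddapp 0, haddapp 1]
  by_cases hw : w = 0
  · have hw0 : w 0 = 0 := by rw [hw]; rfl
    have hw1 : w 1 = 0 := by rw [hw]; rfl
    rw [hw0, hw1]
    simp only [mul_zero, add_zero, hw, ne_eq, not_true_eq_false, false_and,
      not_false_eq_true, iff_true]
    -- nondegeneracy: ξ' not parallel to v
    intro hdet
    have hvne : v 0 ≠ 0 ∨ v 1 ≠ 0 := by
      by_contra h
      push_neg at h
      rw [h.1, h.2] at hvnorm
      norm_num at hvnorm
    have : ∃ c : ℝ, ξ' = c • v := by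
      rcases hvne with h0 | h1
      · refine ⟨ξ' 0 / v 0, ?_⟩
        ext i
        fin_cases i
        · show ξ' 0 = (ξ' 0 / v 0) * v 0
          field_simp
        · show ξ' 1 = (ξ' 0 / v 0) * v 1
          field_simp
          nlinarith [hdet]
      · refine ⟨ξ' 1 / v 1, ?_⟩
        ext i
        fin_cases i
        · show ξ' 0 = (ξ' 1 / v 1) * v 0
          field_simp
          nlinarith [hdet]
        · show ξ' 1 = (ξ' 1 / v 1) * v 1
          field_simp
    obtain ⟨c, hc⟩ := this
    exact hnd u₀ hu₀ hw c hc
  · -- w ≠ 0 : w = c • rot90 v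
    set c : ℝ := w 1 * v 0 - w 0 * v 1 with hcdef
    have hw0 : w 0 = -c * v 1 := by
      rw [hcdef]; linear_combination (-(w 0)) * hvnorm + v 0 * horth
    have hw1 : w 1 = c * v 0 := by
      rw [hcdef]; linear_combination (-(w 1)) * hvnorm + v 1 * horth
    have hc0 : c ≠ 0 := by
      intro h
      apply hw
      ext i
      fin_cases i
      · show w 0 = 0; rw [hw0, h]; ring
      · show w 1 = 0; rw [hw1, h]; ring
    clear_value c
    have hww : (inner ℝ w w : ℝ) = c ^ 2 := by
      rw [hinnerww, hw0, hw1]; linear_combination c ^ 2 * hvnorm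
    set D : ℝ := ξ' 0 * v 1 - ξ' 1 * v 0 with hDdef
    clear_value D
    have hξw : (inner ℝ ξ' w : ℝ) = -c * D := by
      rw [hinnerξw, hw0, hw1, hDdef]; ring
    have hfoc : -((inner ℝ ξ' w : ℝ) / (inner ℝ w w : ℝ)) = D / c := by
      rw [hξw, hww]
      field_simp
    have hdet : (ξ' 0 + t₀ * w 0) * v 1 - v 0 * (ξ' 1 + t₀ * w 1) = D - t₀ * c := by
      rw [hw0, hw1, hDdef]; linear_combination (-(t₀ * c)) * hvnorm
    rw [hdet, hfoc]
    constructor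
    · intro hne hcon
      obtain ⟨-, ht⟩ := hcon
      apply hne
      rw [ht]
      field_simp
      ring
    · intro hncon hzero
      apply hncon
      refine ⟨hw, ?_⟩
      have : t₀ * c = D := by linarith
      field_simp
      linarith [this]

end
end

section
/- Let K be the closed ball of radius ε₀ > 0 about a point x₀ in ℝ². Suppose f : K → ℝ² is C¹ and Df(x₀) is invertible, and let y₀ = f(x₀). Then there exist η, δ > 0 and 0 < ε < ε₀ such that for any C¹ function g : K → ℝ² with dist_{C¹(K,ℝ²)}(f,g) < η, the map g is one-to-one on the open ball B_ε(x₀) and the open ball B_δ(y₀) is contained in g(B_ε(x₀)). -/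
noncomputable section

open Set

open Topology NNReal in
/-- perturbed inverse function theorem. If `f` is `C¹` on the closed
ball `K` of radius `ε₀` about `x₀` and `Df(x₀)` is invertible, then there are
`η, δ > 0` and `0 < ε < ε₀` such that every `C¹` map `g` with `dist_{C¹(K)}(f,g) < η` is
one-to-one on `B_ε(x₀)` and satisfies `B_δ(f x₀) ⊆ g(B_ε(x₀))`. -/
theorem perturbed_inverse_function
    (x₀ : Pt) (ε₀ : ℝ) (hε₀ : 0 < ε₀) (f : Pt → Pt)
    (hf : ContDiffOn ℝ 1 f (Metric.closedBall x₀ ε₀))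
    (hDf : ∃ e : Pt ≃L[ℝ] Pt, (e : Pt →L[ℝ] Pt) = fderiv ℝ f x₀) :
    ∃ η > (0:ℝ), ∃ δ > (0:ℝ), ∃ ε : ℝ, 0 < ε ∧ ε < ε₀ ∧
      ∀ g : Pt → Pt, ContDiffOn ℝ 1 g (Metric.closedBall x₀ ε₀) →
        c1DistOn (Metric.closedBall x₀ ε₀) f g < η →
        Set.InjOn g (Metric.ball x₀ ε) ∧
        Metric.ball (f x₀) δ ⊆ g '' Metric.ball x₀ ε := by
  classical
  obtain ⟨A, hA⟩ := hDf
  set K := Metric.closedBall x₀ ε₀ with hKdef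
  have hx₀K : x₀ ∈ K := Metric.mem_closedBall_self hε₀.le
  have hKnhds : K ∈ 𝓝 x₀ := Metric.closedBall_mem_nhds x₀ hε₀
  have hKu : UniqueDiffOn ℝ K :=
    uniqueDiffOn_convex (convex_closedBall _ _)
      (by rw [hKdef, interior_closedBall x₀ hε₀.ne']; exact ⟨x₀, Metric.mem_ball_self hε₀⟩)
  have hKc : IsCompact K := isCompact_closedBall _ _
  set N0 : ℝ≥0 := ‖(A.symm : Pt →L[ℝ] Pt)‖₊ with hN0
  have hN0pos : 0 < N0 := A.nnnorm_symm_pos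
  set r : ℝ := ((N0 : ℝ))⁻¹ with hr
  have hrpos : 0 < r := by
    rw [hr]; exact inv_pos.2 (by exact_mod_cast hN0pos)
  set c : ℝ≥0 := N0⁻¹ / 2 with hcdef
  have hcR : (c : ℝ) = r / 2 := by rw [hcdef, hr]; push_cast; ring
  have hc : c < N0⁻¹ := by
    have h : (0:ℝ≥0) < N0⁻¹ := by
      rw [pos_iff_ne_zero]; exact inv_ne_zero hN0pos.ne'
    exact NNReal.half_lt_self h.ne'
  have hfx₀ : fderivWithin ℝ f K x₀ = (A : Pt →L[ℝ] Pt) := by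
    rw [fderivWithin_of_mem_nhds hKnhds, hA]
  have hfC : ContinuousOn (fderivWithin ℝ f K) K := hf.continuousOn_fderivWithin hKu le_rfl
  have h1 : (fderivWithin ℝ f K) ⁻¹' Metric.ball ((A : Pt →L[ℝ] Pt)) (r/4) ∈ 𝓝[K] x₀ := by
    have h2 := hfC x₀ hx₀K
    rw [ContinuousWithinAt, hfx₀] at h2
    exact h2 (Metric.ball_mem_nhds _ (by positivity))
  obtain ⟨ε₁, hε₁pos, hε₁⟩ := Metric.mem_nhdsWithin_iff.1 h1
  set ε : ℝ := min (ε₁/2) (ε₀/2) with hεdef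
  have hεpos : 0 < ε := lt_min (by positivity) (by positivity)
  have hεlt : ε < ε₀ := (min_le_right _ _).trans_lt (half_lt_self hε₀)
  have hsubK : Metric.closedBall x₀ ε ⊆ K :=
    Metric.closedBall_subset_closedBall (hεlt.le)
  have hsub1 : Metric.closedBall x₀ ε ⊆ Metric.ball x₀ ε₁ :=
    Metric.closedBall_subset_ball ((min_le_left _ _).trans_lt (half_lt_self hε₁pos))
  have hfkey : ∀ z ∈ Metric.closedBall x₀ ε,
      ‖fderivWithin ℝ f K z - (A : Pt →L[ℝ] Pt)‖ < r/4 := by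
    intro z hz
    have := hε₁ ⟨hsub1 hz, hsubK hz⟩
    simpa [Metric.mem_ball, dist_eq_norm] using this
  set δ' : ℝ := (r - (c:ℝ)) * (ε/2) with hδ'def
  have hδ'pos : 0 < δ' := by
    rw [hδ'def, hcR]; nlinarith
  set η : ℝ := min (r/4) (δ'/4) with hηdef
  have hηpos : 0 < η := lt_min (by positivity) (by positivity)
  refine ⟨η, hηpos, δ'/4, by positivity, ε, hεpos, hεlt, ?_⟩
  intro g hg hdist
  -- pointwise bounds from the sup in c1DistOn
  have hgC : ContinuousOn (fderivWithin ℝ g K) K := hg.continuousOn_fderivWithin hKu le_rfl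
  have hb0 : ‖f x₀ - g x₀‖ < η := by
    have hcont0 : ContinuousOn (fun s => ‖f s - g s‖) K :=
      ((hf.continuousOn).sub (hg.continuousOn)).norm
    have hbdd0 : BddAbove (Set.range fun s : K => ‖f (s : Pt) - g (s : Pt)‖) := by
      have := hKc.bddAbove_image hcont0
      rwa [← Set.range_restrict] at this
    have h0 : ‖f x₀ - g x₀‖ ≤ c1DistOn K f g :=
      (le_ciSup hbdd0 (⟨x₀, hx₀K⟩ : K)).trans (le_max_left _ _)
    exact h0.trans_lt hdist
  have hb1 : ∀ z ∈ K, ‖fderivWithin ℝ f K z - fderivWithin ℝ g K z‖ < η := by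
    intro z hz
    have hcont1 : ContinuousOn (fun s => ‖fderivWithin ℝ f K s - fderivWithin ℝ g K s‖) K :=
      (hfC.sub hgC).norm
    have hbdd1 : BddAbove (Set.range fun s : K =>
        ‖fderivWithin ℝ f K (s : Pt) - fderivWithin ℝ g K (s : Pt)‖) := by
      have := hKc.bddAbove_image hcont1
      rwa [← Set.range_restrict] at this
    have h0 : ‖fderivWithin ℝ f K z - fderivWithin ℝ g K z‖ ≤ c1DistOn K f g :=
      (le_ciSup hbdd1 (⟨z, hz⟩ : K)).trans (le_max_right _ _)
    exact h0.trans_lt hdist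
  have hgd : ∀ z ∈ Metric.closedBall x₀ ε,
      HasFDerivWithinAt g (fderivWithin ℝ g K z) (Metric.closedBall x₀ ε) z := by
    intro z hz
    have hKz : K ∈ 𝓝 z :=
      Metric.closedBall_mem_nhds_of_mem ((Metric.mem_closedBall.1 hz).trans_lt hεlt)
    have hd : DifferentiableAt ℝ g z :=
      (((hg z (hsubK hz)).differentiableWithinAt one_ne_zero)).differentiableAt hKz
    rw [fderivWithin_of_mem_nhds hKz]
    exact hd.hasFDerivAt.hasFDerivWithinAt
  have hbound : ∀ z ∈ Metric.closedBall x₀ ε,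
      ‖fderivWithin ℝ g K z - (A : Pt →L[ℝ] Pt)‖ ≤ (c:ℝ) := by
    intro z hz
    have h2 := hb1 z (hsubK hz)
    have h3 := hfkey z hz
    have h4 : η ≤ r/4 := min_le_left _ _
    have h5 : ‖fderivWithin ℝ g K z - (A : Pt →L[ℝ] Pt)‖ ≤
        ‖fderivWithin ℝ g K z - fderivWithin ℝ f K z‖ +
        ‖fderivWithin ℝ f K z - (A : Pt →L[ℝ] Pt)‖ := norm_sub_le_norm_sub_add_norm_sub _ _ _
    rw [norm_sub_rev] at h2
    rw [hcR]
    linarith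
  have hap : ApproximatesLinearOn g (A : Pt →L[ℝ] Pt) (Metric.closedBall x₀ ε) c := by
    intro x hx y hy
    exact (convex_closedBall x₀ ε).norm_image_sub_le_of_norm_hasFDerivWithin_le'
      hgd hbound hy hx
  constructor
  · exact (hap.injOn (Or.inr hc)).mono Metric.ball_subset_closedBall
  · have hsurj := (hap.mono_set
        (Metric.closedBall_subset_closedBall (half_le_self hεpos.le))).surjOn_closedBall_of_nonlinearRightInverse
        A.toNonlinearRightInverse (by positivity) Set.Subset.rfl
    have hδ'eq : ((A.toNonlinearRightInverse.nnnorm : ℝ)⁻¹ - (c:ℝ)) * (ε/2) = δ' := rfl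
    rw [hδ'eq] at hsurj
    intro y hy
    have hyg : y ∈ Metric.closedBall (g x₀) δ' := by
      have h6 : dist y (g x₀) ≤ dist y (f x₀) + dist (f x₀) (g x₀) := dist_triangle _ _ _
      have h7 : dist y (f x₀) < δ'/4 := Metric.mem_ball.1 hy
      have h8 : dist (f x₀) (g x₀) < η := by rwa [dist_eq_norm]
      have h9 : η ≤ δ'/4 := min_le_right _ _
      have : dist y (g x₀) ≤ δ' := by linarith
      exact Metric.mem_closedBall.2 this
    obtain ⟨z, hz, hgz⟩ := hsurj hyg
    exact ⟨z, Metric.closedBall_subset_ball (half_lt_self hεpos) hz, hgz⟩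

end
end

section
/- Let r ≥ 2, σ ∈ Σ_r, M = M(σ), and let x ≠ y be points in Int(M). Suppose γ₁,…,γ_n are billiard paths from x to y in M that satisfy the non-collinearity condition (NC). Then there exists a billiard path γ from x to y in M which has at least one vertex V that is not a vertex of any of γ₁,…,γ_n. -/
noncomputable section

open Set

namespace EXNV

open ClosedCurve Function

local notation "⟪" a ", " b "⟫" => (inner ℝ a b : ℝ)

lemma pt_inner_apply (v w : Pt) : ⟪v, w⟫ = v 0 * w 0 + v 1 * w 1 := by
  simp [PiLp.inner_apply, Fin.sum_univ_two, RCLike.inner_apply, mul_comm]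

lemma pt_ext {v w : Pt} (h0 : v 0 = w 0) (h1 : v 1 = w 1) : v = w := by
  apply PiLp.ext
  intro i
  fin_cases i <;> assumption

lemma pt_smul_apply (c : ℝ) (v : Pt) (i : Fin 2) : (c • v) i = c * v i := rfl

lemma pt_zero_apply (i : Fin 2) : (0 : Pt) i = 0 := rfl

/-- In the plane, two vectors orthogonal to the same nonzero vector are parallel. -/
lemma ortho2 {w T v : Pt} (hw : w ≠ 0) (hT : T ≠ 0) (h1 : ⟪T, w⟫ = 0) (h2 : ⟪v, w⟫ = 0) :
    ∃ c : ℝ, v = c • T := by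
  rw [pt_inner_apply] at h1 h2
  have hcross : v 0 * T 1 - v 1 * T 0 = 0 := by
    have hw' : w 0 ≠ 0 ∨ w 1 ≠ 0 := by
      by_contra h
      push_neg at h
      exact hw (pt_ext (by simpa using h.1) (by simpa using h.2))
    rcases hw' with h | h
    · have hz : (v 0 * T 1 - v 1 * T 0) * w 0 = 0 := by linear_combination T 1 * h2 - v 1 * h1
      rcases mul_eq_zero.mp hz with h' | h'
      · exact h'
      · exact absurd h' h
    · have hz : (v 0 * T 1 - v 1 * T 0) * w 1 = 0 := by linear_combination v 0 * h1 - T 0 * h2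
      rcases mul_eq_zero.mp hz with h' | h'
      · exact h'
      · exact absurd h' h
  have hT' : T 0 ≠ 0 ∨ T 1 ≠ 0 := by
    by_contra h
    push_neg at h
    exact hT (pt_ext (by simpa using h.1) (by simpa using h.2))
  rcases hT' with h | h
  · refine ⟨v 0 / T 0, pt_ext ?_ ?_⟩
    · rw [pt_smul_apply]; field_simp
    · rw [pt_smul_apply]; field_simp; linarith [hcross]
  · refine ⟨v 1 / T 1, pt_ext ?_ ?_⟩
    · rw [pt_smul_apply]; field_simp; linarith [hcross]
    · rw [pt_smul_apply]; field_simp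

lemma reflect_eq {T a b : Pt} (hT : T ≠ 0) (hab : a ≠ b) (hnorm : ‖a‖ = ‖b‖)
    (h : ⟪a - b, T⟫ = 0) : reflectAcross T a = b := by
  have hw : a - b ≠ 0 := sub_ne_zero.mpr hab
  have h2 : ⟪a + b, a - b⟫ = 0 := by
    rw [inner_add_left, inner_sub_right, inner_sub_right, real_inner_comm b a]
    have ha : ⟪a, a⟫ = ‖a‖ ^ 2 := real_inner_self_eq_norm_sq a
    have hb : ⟪b, b⟫ = ‖b‖ ^ 2 := real_inner_self_eq_norm_sq b
    rw [ha, hb, hnorm]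
    ring
  obtain ⟨c, hc⟩ := ortho2 hw hT (by rw [real_inner_comm]; exact h) h2
  have hTT : ⟪T, T⟫ ≠ 0 := inner_self_ne_zero.mpr hT
  have hsum : ⟪a + b, T⟫ = c * ⟪T, T⟫ := by rw [hc, real_inner_smul_left]
  have hdiff : ⟪a, T⟫ = ⟪b, T⟫ := by
    have := h
    rw [inner_sub_left] at this
    linarith
  have hcoeff : 2 * ⟪a, T⟫ / ⟪T, T⟫ = c := by
    rw [inner_add_left] at hsum
    have h4 : 2 * ⟪a, T⟫ = c * ⟪T, T⟫ := by linarith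
    rw [h4, mul_div_assoc, div_self hTT, mul_one]
  show (2 * ⟪a, T⟫ / ⟪T, T⟫) • T - a = b
  rw [hcoeff, ← hc]
  abel

lemma reflect_fixes {T w : Pt} (_hw : w ≠ 0) (h : reflectAcross T w = w) :
    ∃ c : ℝ, w = c • T := by
  set c := ⟪w, T⟫ / ⟪T, T⟫ with hcdef
  have h2 : (2 * ⟪w, T⟫ / ⟪T, T⟫) • T = w + w := sub_eq_iff_eq_add.mp h
  have h3 : ((2:ℝ) * c) • T = (2:ℝ) • w := by
    rw [two_smul, ← h2, hcdef, mul_div_assoc]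
  have h5 := congrArg (fun v : Pt => ((2:ℝ)⁻¹) • v) h3
  simp only [smul_smul] at h5
  have e1 : (2:ℝ)⁻¹ * (2 * c) = c := by ring
  have e2 : (2:ℝ)⁻¹ * 2 = (1:ℝ) := by norm_num
  rw [e1, e2, one_smul] at h5
  exact ⟨c, h5.symm⟩

section B2
variable {r : ℕ} {σ : ClosedCurve r}

lemma real_inner_self_pos' {v : Pt} (hv : v ≠ 0) : (0:ℝ) < ⟪v, v⟫ :=
  lt_of_le_of_ne real_inner_self_nonneg (Ne.symm (inner_self_ne_zero.mpr hv))

lemma norm_unitDir {p q : Pt} (h : p ≠ q) : ‖unitDir p q‖ = 1 := by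
  have hqp : q - p ≠ 0 := sub_ne_zero.mpr (Ne.symm h)
  rw [unitDir, norm_smul, norm_inv, norm_norm, inv_mul_cancel₀ (norm_ne_zero_iff.mpr hqp)]

lemma smul_unitDir {p q : Pt} (h : p ≠ q) : q = p + dist p q • unitDir p q := by
  have hqp : q - p ≠ 0 := sub_ne_zero.mpr (Ne.symm h)
  rw [unitDir, dist_eq_norm, smul_smul, norm_sub_rev]
  rw [mul_inv_cancel₀ (norm_ne_zero_iff.mpr hqp), one_smul]
  abel

lemma unitDir_symm (p q : Pt) : unitDir q p = - unitDir p q := by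
  rw [unitDir, unitDir, norm_sub_rev, ← smul_neg]
  congr 1
  abel

lemma unitDir_add_smul {p : Pt} {t : ℝ} {u : Pt} (ht : 0 < t) (hu : ‖u‖ = 1) :
    unitDir p (p + t • u) = u := by
  have h1 : p + t • u - p = t • u := by abel
  rw [unitDir, h1, norm_smul, hu, mul_one, Real.norm_eq_abs, abs_of_pos ht, smul_smul,
    inv_mul_cancel₀ ht.ne', one_smul]

lemma sigma_continuous (σ : ClosedCurve r) : Continuous σ.toFun :=
  σ.contDiff.continuous

lemma boundary_eq_image (σ : ClosedCurve r) : σ.boundary = σ.toFun '' Set.Icc (0:ℝ) 1 := by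
  apply Set.Subset.antisymm
  · rintro p ⟨t, rfl⟩
    refine ⟨Int.fract t, ⟨Int.fract_nonneg t, (Int.fract_lt_one t).le⟩, ?_⟩
    have h1 := σ.periodic.sub_int_mul_eq (x := t) (n := ⌊t⌋)
    rw [mul_one, Int.self_sub_floor] at h1
    exact h1
  · rintro p ⟨t, _, rfl⟩
    exact ⟨t, rfl⟩

lemma boundary_compact (σ : ClosedCurve r) : IsCompact σ.boundary := by
  rw [boundary_eq_image]
  exact isCompact_Icc.image (sigma_continuous σ)

lemma boundary_nonempty (σ : ClosedCurve r) : σ.boundary.Nonempty :=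
  ⟨σ.toFun 0, 0, rfl⟩

lemma boundary_subset_table (σ : ClosedCurve r) : σ.boundary ⊆ σ.table :=
  subset_convexHull ℝ _

lemma table_convex (σ : ClosedCurve r) : Convex ℝ σ.table := convex_convexHull ℝ _

lemma deriv_periodic (σ : ClosedCurve r) : Function.Periodic (deriv σ.toFun) 1 := by
  intro t
  have h1 : (fun u => σ.toFun (u + 1)) = σ.toFun := funext fun u => σ.periodic u
  calc deriv σ.toFun (t + 1) = deriv (fun u => σ.toFun (u + 1)) t :=
        (deriv_comp_add_const _ _ _).symm
    _ = deriv σ.toFun t := by rw [h1]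

lemma deriv_congr_of_eq (σ : ClosedCurve r) {s t : ℝ} (h : σ.toFun s = σ.toFun t) :
    deriv σ.toFun s = deriv σ.toFun t := by
  have key : ∀ u : ℝ, σ.toFun (Int.fract u) = σ.toFun u ∧
      deriv σ.toFun (Int.fract u) = deriv σ.toFun u := by
    intro u
    constructor
    · have h1 := σ.periodic.sub_int_mul_eq (x := u) (n := ⌊u⌋)
      rw [mul_one, Int.self_sub_floor] at h1
      exact h1
    · have h1 := (deriv_periodic σ).sub_int_mul_eq (x := u) (n := ⌊u⌋)
      rw [mul_one, Int.self_sub_floor] at h1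
      exact h1
  have hfr : Int.fract s = Int.fract t := by
    apply σ.inj ⟨Int.fract_nonneg s, Int.fract_lt_one s⟩ ⟨Int.fract_nonneg t, Int.fract_lt_one t⟩
    rw [(key s).1, (key t).1, h]
  rw [← (key s).2, ← (key t).2, hfr]

lemma deriv_ne_zero (σ : ClosedCurve r) (s : ℝ) : deriv σ.toFun s ≠ 0 := by
  obtain ⟨c, hc, hnorm⟩ := σ.constSpeed
  intro h0
  have h1 := hnorm s
  rw [h0, norm_zero] at h1
  exact absurd h1.symm hc.ne'

lemma rot90_apply0 (w : Pt) : rot90 w 0 = -(w 1) := rfl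
lemma rot90_apply1 (w : Pt) : rot90 w 1 = w 0 := rfl

lemma rot90_inner (w : Pt) : ⟪rot90 w, w⟫ = 0 := by
  rw [pt_inner_apply, rot90_apply0, rot90_apply1]
  ring

lemma rot90_ne_zero {w : Pt} (hw : w ≠ 0) : rot90 w ≠ 0 := by
  intro h
  apply hw
  apply pt_ext
  · have := congrArg (fun v : Pt => v 1) h
    simpa [rot90_apply1] using this
  · have := congrArg (fun v : Pt => v 0) h
    have h2 : -(w 1) = 0 := by simpa [rot90_apply0] using this
    simpa using h2

lemma strict_triangle {A Q B : Pt} (h : ¬ Wbtw ℝ A Q B) : dist A B < dist A Q + dist Q B := by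
  rcases lt_or_eq_of_le (dist_triangle A Q B) with h' | h'
  · exact h'
  · exact absurd (dist_add_dist_eq_iff.mp h'.symm) h

lemma exists_boundary_not_wbtw (σ : ClosedCurve r) (hin : (interior σ.table).Nonempty)
    (A B : Pt) : ∃ Q ∈ σ.boundary, ¬ Wbtw ℝ A Q B := by
  by_contra hcon
  push_neg at hcon
  have hsub : σ.boundary ⊆ segment ℝ A B := fun Q hQ => mem_segment_iff_wbtw.mpr (hcon Q hQ)
  have htab : σ.table ⊆ segment ℝ A B := convexHull_min hsub (convex_segment A B)
  obtain ⟨z, hz⟩ := hin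
  obtain ⟨ε, hε, hball⟩ := Metric.isOpen_iff.mp isOpen_interior z hz
  have hball' : Metric.ball z ε ⊆ segment ℝ A B := fun w hw => htab (interior_subset (hball hw))
  have hmem : ∀ v : Pt, ‖v‖ < ε → z + v ∈ segment ℝ A B := by
    intro v hv
    apply hball'
    rw [Metric.mem_ball, dist_eq_norm]
    simpa using hv
  set w := B - A with hwdef
  rcases eq_or_ne w 0 with hw | hw
  · -- A = B, segment is a point
    have hAB : A = B := (sub_eq_zero.mp hw).symm
    have hseg : segment ℝ A B = {A} := by rw [← hAB, segment_same]
    set e : Pt := (WithLp.equiv 2 (Fin 2 → ℝ)).symm ![1, 0] with hedef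
    have he : e ≠ 0 := by
      intro h0
      have := congrArg (fun v : Pt => v 0) h0
      simp only [hedef] at this
      exact one_ne_zero (by exact this)
    set cc : ℝ := (ε / 2) * (‖e‖ + 1)⁻¹ with hccdef
    have hepos : (0:ℝ) < ‖e‖ + 1 := by positivity
    have hcc : 0 < cc := by
      have : (0:ℝ) < (‖e‖ + 1)⁻¹ := by positivity
      positivity
    have hsm : ‖cc • e‖ < ε := by
      rw [norm_smul, Real.norm_eq_abs, abs_of_pos hcc, hccdef]
      have ha : (0:ℝ) < (‖e‖ + 1)⁻¹ := by positivity
      have hinv : (‖e‖ + 1)⁻¹ * (‖e‖ + 1) = 1 := inv_mul_cancel₀ hepos.ne'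
      have key : ε / 2 * (‖e‖ + 1)⁻¹ * ‖e‖ ≤ ε / 2 * ((‖e‖ + 1)⁻¹ * (‖e‖ + 1)) := by
        rw [mul_assoc]
        apply mul_le_mul_of_nonneg_left _ (by linarith : (0:ℝ) ≤ ε / 2)
        apply mul_le_mul_of_nonneg_left (by linarith) ha.le
      rw [hinv, mul_one] at key
      linarith
    have h1 : z ∈ ({A} : Set Pt) := by
      rw [← hseg]; simpa using hmem 0 (by simpa using hε)
    have h2 : z + cc • e ∈ ({A} : Set Pt) := by
      rw [← hseg]; exact hmem _ hsm
    rw [Set.mem_singleton_iff] at h1 h2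
    rw [h1] at h2
    have h3 : cc • e = 0 := by
      have := congrArg (fun p : Pt => p - A) h2
      simpa using this
    rcases smul_eq_zero.mp h3 with h3 | h3
    · exact hcc.ne' h3
    · exact he h3
  · set v := rot90 w with hvdef
    have hv0 : v ≠ 0 := rot90_ne_zero hw
    have hvn : 0 < ‖v‖ := norm_pos_iff.mpr hv0
    set δ := (ε / 2) * ‖v‖⁻¹ with hδdef
    have hδ : 0 < δ := by positivity
    have hz1 : z ∈ segment ℝ A B := by simpa using hmem 0 (by simpa using hε)
    have hz2 : z + δ • v ∈ segment ℝ A B := by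
      apply hmem
      rw [norm_smul, Real.norm_eq_abs, abs_of_pos hδ, hδdef]
      rw [mul_assoc, inv_mul_cancel₀ hvn.ne', mul_one]
      linarith
    rw [segment_eq_image'] at hz1 hz2
    obtain ⟨t, _, hzt0⟩ := hz1
    obtain ⟨t', _, hzt0'⟩ := hz2
    have hzt : A + t • (B - A) = z := hzt0
    have hzt' : A + t' • (B - A) = z + δ • v := hzt0'
    have heq : δ • v = (t' - t) • w := by
      have h3 : (A + t' • (B - A)) - (A + t • (B - A)) = δ • v := by
        rw [hzt, hzt']; abel
      rw [sub_smul, hwdef, ← h3]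
      abel
    have hinner := congrArg (fun u : Pt => ⟪v, u⟫) heq
    simp only [real_inner_smul_right] at hinner
    have hvw : ⟪v, w⟫ = 0 := rot90_inner w
    rw [hvw, mul_zero] at hinner
    have hvvpos : (0:ℝ) < ⟪v, v⟫ := real_inner_self_pos' hv0
    nlinarith

end B2

section B3
variable {r : ℕ} {σ : ClosedCurve r} {x y : Pt}

/-- Derivative of the distance from a fixed point to a moving point. -/
lemma hasDerivAt_dist_comp {f : ℝ → Pt} {T : Pt} {s : ℝ} (hf : HasDerivAt f T s)
    {c : Pt} (h : f s ≠ c) :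
    HasDerivAt (fun u => dist c (f u)) ⟪unitDir c (f s), T⟫ s := by
  have hfc : HasDerivAt (fun u => f u - c) T s := hf.sub_const c
  have h1 : HasDerivAt (fun u => (inner ℝ (f u - c) (f u - c) : ℝ)) (2 * ⟪f s - c, T⟫) s := by
    have h2 := HasDerivAt.inner ℝ hfc hfc
    rw [real_inner_comm (f s - c) T, ← two_mul] at h2
    exact h2
  have hne : f s - c ≠ 0 := sub_ne_zero.mpr h
  have hpos : (0:ℝ) < ⟪f s - c, f s - c⟫ := real_inner_self_pos' hne
  have h2 : HasDerivAt Real.sqrt (1 / (2 * Real.sqrt ⟪f s - c, f s - c⟫))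
      ⟪f s - c, f s - c⟫ := Real.hasDerivAt_sqrt hpos.ne'
  have h3 := h2.comp s h1
  have hnorm : ∀ v : Pt, Real.sqrt ⟪v, v⟫ = ‖v‖ := by
    intro v
    rw [real_inner_self_eq_norm_mul_norm]
    exact Real.sqrt_mul_self (norm_nonneg _)
  have hval : 1 / (2 * Real.sqrt ⟪f s - c, f s - c⟫) * (2 * ⟪f s - c, T⟫)
      = ⟪unitDir c (f s), T⟫ := by
    rw [hnorm, unitDir, real_inner_smul_left]
    have hn0 : ‖f s - c‖ ≠ 0 := norm_ne_zero_iff.mpr hne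
    field_simp
  have h4 : HasDerivAt (fun u => Real.sqrt (inner ℝ (f u - c) (f u - c) : ℝ))
      ⟪unitDir c (f s), T⟫ s := by
    rw [← hval]
    exact h3
  apply h4.congr_of_eventuallyEq
  filter_upwards with u
  rw [dist_eq_norm, norm_sub_rev, ← hnorm (f u - c)]

/-- The polygonal length functional. -/
noncomputable def glen (m : ℕ) (p : ℕ → Pt) : ℝ :=
  ∑ i ∈ Finset.range (m + 1), dist (p i) (p (i + 1))

def KF (σ : ClosedCurve r) (x y : Pt) (m : ℕ) : ℕ → Set Pt := fun i =>
  if i = 0 then {x} else if i ≤ m then σ.boundary else {y}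

def KS (σ : ClosedCurve r) (x y : Pt) (m : ℕ) : Set (ℕ → Pt) := Set.pi Set.univ (KF σ x y m)

lemma KF_zero (σ : ClosedCurve r) (x y : Pt) (m : ℕ) : KF σ x y m 0 = {x} := by
  unfold KF; rw [if_pos rfl]

lemma KF_bdry (σ : ClosedCurve r) (x y : Pt) {m i : ℕ} (h1 : 1 ≤ i) (h2 : i ≤ m) :
    KF σ x y m i = σ.boundary := by
  unfold KF; rw [if_neg (by omega), if_pos h2]

lemma KF_top (σ : ClosedCurve r) (x y : Pt) {m i : ℕ} (h : m < i) : KF σ x y m i = {y} := by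
  unfold KF; rw [if_neg (by omega), if_neg (by omega)]

lemma KS_zero {m : ℕ} {p : ℕ → Pt} (hp : p ∈ KS σ x y m) : p 0 = x := by
  have h := hp 0 (Set.mem_univ 0)
  rw [KF_zero] at h
  exact h

lemma KS_bdry {m : ℕ} {p : ℕ → Pt} (hp : p ∈ KS σ x y m) {i : ℕ} (h1 : 1 ≤ i) (h2 : i ≤ m) :
    p i ∈ σ.boundary := by
  have h := hp i (Set.mem_univ i)
  rw [KF_bdry σ x y h1 h2] at h
  exact h

lemma KS_top {m : ℕ} {p : ℕ → Pt} (hp : p ∈ KS σ x y m) {i : ℕ} (h : m < i) : p i = y := by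
  have h' := hp i (Set.mem_univ i)
  rw [KF_top σ x y h] at h'
  exact h'

lemma KS_update {m : ℕ} {p : ℕ → Pt} (hp : p ∈ KS σ x y m) {i : ℕ} (h1 : 1 ≤ i) (h2 : i ≤ m)
    {z : Pt} (hz : z ∈ σ.boundary) : Function.update p i z ∈ KS σ x y m := by
  intro k _
  rcases eq_or_ne k i with rfl | hk
  · rw [Function.update_self, KF_bdry σ x y h1 h2]
    exact hz
  · rw [Function.update_of_ne hk]
    exact hp k (Set.mem_univ k)

lemma KS_compact (σ : ClosedCurve r) (x y : Pt) (m : ℕ) : IsCompact (KS σ x y m) := by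
  apply isCompact_univ_pi
  intro i
  unfold KF
  split_ifs
  · exact isCompact_singleton
  · exact boundary_compact σ
  · exact isCompact_singleton

lemma KS_nonempty (σ : ClosedCurve r) (x y : Pt) (m : ℕ) : (KS σ x y m).Nonempty := by
  obtain ⟨b, hb⟩ := boundary_nonempty σ
  refine ⟨fun i => if i = 0 then x else if i ≤ m then b else y, ?_⟩
  intro i _
  unfold KF
  by_cases hh1 : i = 0
  · simp [hh1]
  · by_cases hh2 : i ≤ m
    · simp [hh1, hh2, hb]
    · simp [hh1, hh2]

lemma glen_continuous (m : ℕ) : Continuous (glen m : (ℕ → Pt) → ℝ) := by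
  apply continuous_finset_sum
  intro i _
  exact Continuous.dist (continuous_apply i) (continuous_apply (i + 1))

lemma exists_max (σ : ClosedCurve r) (x y : Pt) (m : ℕ) :
    ∃ p ∈ KS σ x y m, IsMaxOn (glen m) (KS σ x y m) p :=
  (KS_compact σ x y m).exists_isMaxOn (KS_nonempty σ x y m) (glen_continuous m).continuousOn

lemma glen_update {m : ℕ} (p : ℕ → Pt) {i : ℕ} (h1 : 1 ≤ i) (h2 : i ≤ m) (z : Pt) :
    glen m (Function.update p i z) + (dist (p (i - 1)) (p i) + dist (p i) (p (i + 1)))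
      = glen m p + (dist (p (i - 1)) z + dist z (p (i + 1))) := by
  classical
  set q := Function.update p i z with hq
  have hi1 : i - 1 ∈ Finset.range (m + 1) := by
    simp only [Finset.mem_range]; omega
  have hii : i ∈ (Finset.range (m + 1)).erase (i - 1) := by
    simp only [Finset.mem_erase, Finset.mem_range]
    omega
  have dec : ∀ h : ℕ → Pt, glen m h = dist (h (i - 1)) (h (i - 1 + 1)) +
      (dist (h i) (h (i + 1)) +
        ∑ k ∈ ((Finset.range (m + 1)).erase (i - 1)).erase i, dist (h k) (h (k + 1))) := by
    intro h
    rw [glen, ← Finset.add_sum_erase _ _ hi1, ← Finset.add_sum_erase _ _ hii]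
  have hieq : i - 1 + 1 = i := by omega
  have e1 : ∑ k ∈ ((Finset.range (m + 1)).erase (i - 1)).erase i, dist (q k) (q (k + 1))
      = ∑ k ∈ ((Finset.range (m + 1)).erase (i - 1)).erase i, dist (p k) (p (k + 1)) := by
    apply Finset.sum_congr rfl
    intro k hk
    obtain ⟨hki, hk'⟩ := Finset.mem_erase.mp hk
    obtain ⟨hki1, _⟩ := Finset.mem_erase.mp hk'
    rw [hq, Function.update_of_ne hki, Function.update_of_ne (by omega : k + 1 ≠ i)]
  have hq1 : q (i - 1) = p (i - 1) := Function.update_of_ne (by omega) _ _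
  have hq2 : q i = z := Function.update_self _ _ _
  have hq3 : q (i + 1) = p (i + 1) := Function.update_of_ne (by omega) _ _
  rw [dec p, dec q, e1, hieq, hq1, hq2, hq3]
  ring

end B3

section B4
variable {r : ℕ} {σ : ClosedCurve r} {x y : Pt}

/-- At a maximizing configuration, no vertex lies between its neighbours. -/
lemma max_not_wbtw (hin : (interior σ.table).Nonempty) {m : ℕ} {p : ℕ → Pt}
    (hmem : p ∈ KS σ x y m) (hmax : IsMaxOn (glen m) (KS σ x y m) p)
    {i : ℕ} (h1 : 1 ≤ i) (h2 : i ≤ m) :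
    ¬ Wbtw ℝ (p (i - 1)) (p i) (p (i + 1)) := by
  intro hW
  obtain ⟨Q, hQb, hQn⟩ := exists_boundary_not_wbtw σ hin (p (i - 1)) (p (i + 1))
  have hq : Function.update p i Q ∈ KS σ x y m := KS_update hmem h1 h2 hQb
  have hle : glen m (Function.update p i Q) ≤ glen m p := hmax hq
  have hupd := glen_update p h1 h2 Q
  have heq : dist (p (i - 1)) (p i) + dist (p i) (p (i + 1)) = dist (p (i - 1)) (p (i + 1)) :=
    dist_add_dist_eq_iff.mpr hW
  have hst : dist (p (i - 1)) (p (i + 1)) < dist (p (i - 1)) Q + dist Q (p (i + 1)) :=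
    strict_triangle hQn
  linarith

lemma max_consec_ne (hxy : x ≠ y) (hin : (interior σ.table).Nonempty) {m : ℕ} {p : ℕ → Pt}
    (hmem : p ∈ KS σ x y m) (hmax : IsMaxOn (glen m) (KS σ x y m) p)
    {i : ℕ} (hi : i ≤ m) : p i ≠ p (i + 1) := by
  rcases Nat.eq_zero_or_pos i with rfl | hpos
  · rcases Nat.eq_zero_or_pos m with rfl | hm
    · rw [KS_zero hmem, KS_top hmem (by omega : (0:ℕ) < 1)]
      exact hxy
    · intro h
      apply max_not_wbtw hin hmem hmax (le_refl 1) hm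
      have h0 : (1:ℕ) - 1 = 0 := rfl
      rw [h0, ← h]
      exact wbtw_self_left ℝ (p 0) (p 2)
  · intro h
    apply max_not_wbtw hin hmem hmax hpos hi
    rw [h]
    exact wbtw_self_right ℝ (p (i - 1)) (p (i + 1))

/-- At a maximizing configuration, the billiard reflection law holds at every vertex. -/
lemma max_reflect (hdiff : Differentiable ℝ σ.toFun) (hxy : x ≠ y)
    (hin : (interior σ.table).Nonempty) {m : ℕ} {p : ℕ → Pt}
    (hmem : p ∈ KS σ x y m) (hmax : IsMaxOn (glen m) (KS σ x y m) p)
    {i : ℕ} (h1 : 1 ≤ i) (h2 : i ≤ m) :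
    ∃ s : ℝ, σ.toFun s = p i ∧
      unitDir (p i) (p (i + 1)) = reflectAcross (deriv σ.toFun s) (unitDir (p (i - 1)) (p i)) := by
  obtain ⟨s₀, hs₀⟩ := KS_bdry hmem h1 h2
  have hPA : p (i - 1) ≠ p i := by
    intro h
    apply max_not_wbtw hin hmem hmax h1 h2
    rw [← h]
    exact wbtw_self_left ℝ (p (i - 1)) (p (i + 1))
  have hPB : p i ≠ p (i + 1) := max_consec_ne hxy hin hmem hmax h2
  have hds : HasDerivAt σ.toFun (deriv σ.toFun s₀) s₀ := (hdiff s₀).hasDerivAt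
  have hmaxpsi : ∀ u : ℝ, dist (p (i - 1)) (σ.toFun u) + dist (p (i + 1)) (σ.toFun u)
      ≤ dist (p (i - 1)) (σ.toFun s₀) + dist (p (i + 1)) (σ.toFun s₀) := by
    intro u
    have hb : σ.toFun u ∈ σ.boundary := ⟨u, rfl⟩
    have hq : Function.update p i (σ.toFun u) ∈ KS σ x y m := KS_update hmem h1 h2 hb
    have hle : glen m (Function.update p i (σ.toFun u)) ≤ glen m p := hmax hq
    have hupd := glen_update p h1 h2 (σ.toFun u)
    have e2 : dist (σ.toFun u) (p (i + 1)) = dist (p (i + 1)) (σ.toFun u) := dist_comm _ _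
    have e3 : dist (p i) (p (i + 1)) = dist (p (i + 1)) (p i) := dist_comm _ _
    rw [hs₀]
    rw [e2] at hupd
    rw [e3] at hupd
    linarith
  have hd1 : HasDerivAt (fun u => dist (p (i - 1)) (σ.toFun u))
      ⟪unitDir (p (i - 1)) (σ.toFun s₀), deriv σ.toFun s₀⟫ s₀ :=
    hasDerivAt_dist_comp hds (by rw [hs₀]; exact Ne.symm hPA)
  have hd2 : HasDerivAt (fun u => dist (p (i + 1)) (σ.toFun u))
      ⟪unitDir (p (i + 1)) (σ.toFun s₀), deriv σ.toFun s₀⟫ s₀ :=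
    hasDerivAt_dist_comp hds (by rw [hs₀]; exact hPB)
  have hpsi := hd1.add hd2
  have hloc : IsLocalMax (fun u => dist (p (i - 1)) (σ.toFun u)
      + dist (p (i + 1)) (σ.toFun u)) s₀ := by
    apply IsMaxOn.isLocalMax (s := Set.univ) _ Filter.univ_mem
    intro u _
    exact hmaxpsi u
  have hzero := hloc.hasDerivAt_eq_zero hpsi
  have hBP : unitDir (p (i + 1)) (σ.toFun s₀) = - unitDir (p i) (p (i + 1)) := by
    rw [hs₀, unitDir_symm]
  have hAP : unitDir (p (i - 1)) (σ.toFun s₀) = unitDir (p (i - 1)) (p i) := by rw [hs₀]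
  rw [hBP, hAP] at hzero
  have hinner : ⟪unitDir (p (i - 1)) (p i) - unitDir (p i) (p (i + 1)), deriv σ.toFun s₀⟫ = 0 := by
    rw [inner_sub_left]
    have hneg : ⟪(-unitDir (p i) (p (i + 1)) : Pt), deriv σ.toFun s₀⟫
        = -⟪unitDir (p i) (p (i + 1)), deriv σ.toFun s₀⟫ := by rw [inner_neg_left]
    rw [hneg] at hzero
    linarith
  have hab : unitDir (p (i - 1)) (p i) ≠ unitDir (p i) (p (i + 1)) := by
    intro hEq
    apply max_not_wbtw hin hmem hmax h1 h2
    rw [wbtw_iff_sameRay_vsub]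
    have e1 : p i -ᵥ p (i - 1) = dist (p (i - 1)) (p i) • unitDir (p (i - 1)) (p i) := by
      rw [vsub_eq_sub]
      have h := smul_unitDir hPA
      nth_rewrite 1 [h]
      abel
    have e2 : p (i + 1) -ᵥ p i = dist (p i) (p (i + 1)) • unitDir (p i) (p (i + 1)) := by
      rw [vsub_eq_sub]
      have h := smul_unitDir hPB
      nth_rewrite 1 [h]
      abel
    rw [e1, e2, ← hEq]
    exact SameRay.nonneg_smul_right
      (SameRay.nonneg_smul_left (SameRay.refl _) dist_nonneg) dist_nonneg
  refine ⟨s₀, hs₀, ?_⟩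
  symm
  apply reflect_eq (deriv_ne_zero σ s₀) hab
  · rw [norm_unitDir hPA, norm_unitDir hPB]
  · exact hinner

end B4

section B5
variable {r : ℕ} {σ : ClosedCurve r} {x y : Pt}

/-- Build a billiard path from a maximizing configuration. -/
noncomputable def maxPath (hdiff : Differentiable ℝ σ.toFun) (hxy : x ≠ y)
    (hx : x ∈ interior σ.table) (hy : y ∈ interior σ.table) {m : ℕ} {p : ℕ → Pt}
    (hmem : p ∈ KS σ x y m) (hmax : IsMaxOn (glen m) (KS σ x y m) p) :
    BilliardPath σ x y where
  m := m
  V := p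
  head_eq := KS_zero hmem
  last_eq := KS_top hmem (by omega)
  consec_ne := fun i hi => max_consec_ne hxy ⟨x, hx⟩ hmem hmax hi
  vertex_mem := fun i h1 h2 => KS_bdry hmem h1 h2
  seg_sub := by
    intro i hi
    have hmemtab : ∀ j : ℕ, j ≤ m + 1 → p j ∈ σ.table := by
      intro j hj
      rcases Nat.eq_zero_or_pos j with rfl | hj1
      · rw [KS_zero hmem]
        exact interior_subset hx
      · rcases Nat.lt_or_ge m j with hj2 | hj2
        · rw [KS_top hmem hj2]
          exact interior_subset hy
        · exact boundary_subset_table σ (KS_bdry hmem hj1 hj2)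
    exact (table_convex σ).segment_subset (hmemtab i (by omega)) (hmemtab (i+1) (by omega))
  reflect := fun i h1 h2 => max_reflect hdiff hxy ⟨x, hx⟩ hmem hmax h1 h2

/-- Auxiliary rigidity step: a maximizing configuration cannot have another boundary
point strictly beyond its `j`-th vertex on the ray it follows. -/
lemma max_no_far_point (hin : (interior σ.table).Nonempty)
    {mm j : ℕ} {pp : ℕ → Pt} {u : Pt} (hnu : ‖u‖ = 1)
    (hm : pp ∈ KS σ x y mm) (hM : IsMaxOn (glen mm) (KS σ x y mm) pp)
    (hj1 : 1 ≤ j) (hjmm : j ≤ mm) {z : Pt} {tt tt' : ℝ} (hzb : z ∈ σ.boundary)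
    (hppj : pp j = pp (j - 1) + tt • u) (hz : z = pp (j - 1) + tt' • u)
    (htt : 0 < tt) (httlt : tt < tt') : False := by
  have hu0 : u ≠ 0 := by
    intro h0
    rw [h0, norm_zero] at hnu
    exact one_ne_zero hnu.symm
  have hne : pp j ≠ z := by
    intro h
    rw [hppj, hz] at h
    have h2 : tt • u = tt' • u := add_left_cancel h
    have h3 : (tt - tt') • u = 0 := by rw [sub_smul, h2, sub_self]
    rcases smul_eq_zero.mp h3 with h4 | h4
    · have h5 := sub_eq_zero.mp h4
      linarith
    · exact hu0 h4
  have hupdmem : Function.update pp j z ∈ KS σ x y mm := KS_update hm hj1 hjmm hzb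
  have hle : glen mm (Function.update pp j z) ≤ glen mm pp := hM hupdmem
  have hupd := glen_update pp hj1 hjmm z
  have hd1 : dist (pp (j - 1)) (pp j) = tt := by
    rw [hppj, dist_eq_norm]
    have h3 : pp (j - 1) - (pp (j - 1) + tt • u) = -(tt • u) := by abel
    rw [h3, norm_neg, norm_smul, hnu, mul_one, Real.norm_eq_abs, abs_of_pos htt]
  have hd2 : dist (pp (j - 1)) z = tt' := by
    rw [hz, dist_eq_norm]
    have h3 : pp (j - 1) - (pp (j - 1) + tt' • u) = -(tt' • u) := by abel
    rw [h3, norm_neg, norm_smul, hnu, mul_one, Real.norm_eq_abs,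
      abs_of_pos (by linarith : (0:ℝ) < tt')]
  have hd3 : dist (pp j) z = tt' - tt := by
    rw [hppj, hz, dist_eq_norm]
    have h3 : pp (j - 1) + tt • u - (pp (j - 1) + tt' • u) = -((tt' - tt) • u) := by
      rw [sub_smul]; abel
    rw [h3, norm_neg, norm_smul, hnu, mul_one, Real.norm_eq_abs,
      abs_of_pos (by linarith : (0:ℝ) < tt' - tt)]
  have htri : dist (pp j) (pp (j + 1)) ≤ dist (pp j) z + dist z (pp (j + 1)) :=
    dist_triangle _ _ _
  rw [hd1, hd2] at hupd
  rw [hd3] at htri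
  have hkey : dist (pp j) z + dist z (pp (j + 1)) = dist (pp j) (pp (j + 1)) := by
    rw [hd3]
    linarith
  have hWz : Wbtw ℝ (pp j) z (pp (j + 1)) := dist_add_dist_eq_iff.mp hkey
  apply max_not_wbtw hin hm hM hj1 hjmm
  have hz' : z ∈ segment ℝ (pp j) (pp (j + 1)) := mem_segment_iff_wbtw.mpr hWz
  rw [segment_eq_image'] at hz'
  obtain ⟨θ, hθ, hzθ0⟩ := hz'
  have hzθ : pp j + θ • (pp (j + 1) - pp j) = z := hzθ0
  have hθne : θ ≠ 0 := by
    intro h0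
    rw [h0, zero_smul, add_zero] at hzθ
    exact hne hzθ
  have hθpos : 0 < θ := lt_of_le_of_ne hθ.1 (Ne.symm hθne)
  have h7 : θ • (pp (j + 1) - pp j) = (tt' - tt) • u := by
    have h8 : z - pp j = (tt' - tt) • u := by
      rw [hz, hppj, sub_smul]
      abel
    rw [← h8, ← hzθ]
    abel
  have hWj : pp (j + 1) - pp j = (θ⁻¹ * (tt' - tt)) • u := by
    calc pp (j + 1) - pp j = θ⁻¹ • (θ • (pp (j + 1) - pp j)) := by
          rw [smul_smul, inv_mul_cancel₀ hθne, one_smul]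
      _ = θ⁻¹ • ((tt' - tt) • u) := by rw [h7]
      _ = (θ⁻¹ * (tt' - tt)) • u := by rw [smul_smul]
  have hji : pp j - pp (j - 1) = tt • u := by
    rw [hppj]
    abel
  rw [wbtw_iff_sameRay_vsub, vsub_eq_sub, vsub_eq_sub, hji, hWj]
  exact SameRay.nonneg_smul_right (SameRay.sameRay_nonneg_smul_left u htt.le)
    (mul_nonneg (inv_nonneg.mpr hθpos.le) (by linarith))

/-- Key rigidity lemma: two maximizing configurations that share the vertex at `j - 1`
and emit the same direction there have the same vertex at `j`. -/
lemma same_next (hin : (interior σ.table).Nonempty)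
    {m m' j : ℕ} {p q : ℕ → Pt}
    (hmem : p ∈ KS σ x y m) (hmax : IsMaxOn (glen m) (KS σ x y m) p)
    (hmem' : q ∈ KS σ x y m') (hmax' : IsMaxOn (glen m') (KS σ x y m') q)
    (hj1 : 1 ≤ j) (hjm : j ≤ m) (hjm' : j ≤ m')
    (hbase : p (j - 1) = q (j - 1))
    (hdir : unitDir (p (j - 1)) (p j) = unitDir (q (j - 1)) (q j)) :
    p j = q j := by
  have hCp : p (j - 1) ≠ p j := by
    intro h
    apply max_not_wbtw hin hmem hmax hj1 hjm
    rw [← h]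
    exact wbtw_self_left ℝ _ _
  have hCq : q (j - 1) ≠ q j := by
    intro h
    apply max_not_wbtw hin hmem' hmax' hj1 hjm'
    rw [← h]
    exact wbtw_self_left ℝ _ _
  have hnu : ‖unitDir (p (j - 1)) (p j)‖ = 1 := norm_unitDir hCp
  have hp : p j = p (j - 1) + dist (p (j - 1)) (p j) • unitDir (p (j - 1)) (p j) := by
    nth_rewrite 1 [smul_unitDir hCp]
    rfl
  have hq : q j = p (j - 1) + dist (q (j - 1)) (q j) • unitDir (p (j - 1)) (p j) := by
    nth_rewrite 1 [smul_unitDir hCq]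
    rw [← hdir, hbase]
  have hq' := hq
  nth_rewrite 1 [hbase] at hq'
  have hp' := hp
  nth_rewrite 1 [hbase] at hp'
  have htpos : 0 < dist (p (j - 1)) (p j) := dist_pos.mpr hCp
  have htpos' : 0 < dist (q (j - 1)) (q j) := dist_pos.mpr hCq
  rcases lt_trichotomy (dist (p (j - 1)) (p j)) (dist (q (j - 1)) (q j)) with hlt | heq | hlt
  · exact absurd (max_no_far_point hin hnu hmem hmax hj1 hjm
      (KS_bdry hmem' hj1 hjm') hp hq htpos hlt) (by simp)
  · rw [hp, hq, heq]
  · exact absurd (max_no_far_point hin hnu hmem' hmax' hj1 hjm'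
      (KS_bdry hmem hj1 hjm) hq' hp' htpos' hlt) (by simp)

end B5

section Main
variable {r : ℕ} {σ : ClosedCurve r} {x y : Pt}

lemma main_contra (hdiff : Differentiable ℝ σ.toFun) (hxy : x ≠ y)
    (hin : (interior σ.table).Nonempty)
    {n : ℕ} (γ : Fin n → BilliardPath σ x y)
    (hNC : NonCollinearCond y (fun i => (γ i).m) (fun i => (γ i).V))
    (p : ℕ → ℕ → Pt)
    (hKS : ∀ m, p m ∈ KS σ x y (m + 1))
    (hMax : ∀ m, IsMaxOn (glen (m + 1)) (KS σ x y (m + 1)) (p m))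
    (hvert : ∀ m k : ℕ, 1 ≤ k → k ≤ m + 1 →
      ∃ i : Fin n, ∃ j : ℕ, 1 ≤ j ∧ j ≤ (γ i).m ∧ (γ i).V j = p m k)
    (a b : ℕ) (hab : a < b) (h1 : p a 1 = p b 1) : False := by
  -- the two maximizing paths agree on the whole prefix of the shorter one
  have hpre2 : ∀ j : ℕ, j ≤ a + 1 → ∀ k ≤ j, p a k = p b k := by
    intro j
    induction j with
    | zero =>
      intro _ k hk
      have hk0 : k = 0 := by omega
      subst hk0
      rw [KS_zero (hKS a), KS_zero (hKS b)]
    | succ j ih =>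
      intro hj k hk
      rcases Nat.lt_or_ge k (j + 1) with h | h
      · exact ih (by omega) k (by omega)
      · have hkj : k = j + 1 := by omega
        subst hkj
        rcases Nat.lt_or_ge j 1 with hj0 | hj1
        · have hj00 : j = 0 := by omega
          subst hj00
          exact h1
        · apply same_next hin (hKS a) (hMax a) (hKS b) (hMax b)
            (by omega : 1 ≤ j + 1) (by omega : j + 1 ≤ a + 1) (by omega : j + 1 ≤ b + 1)
          · have e : j + 1 - 1 = j := by omega
            rw [e]
            exact ih (by omega) j (le_refl j)
          · have e : j + 1 - 1 = j := by omega
            rw [e]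
            obtain ⟨s, hs, hr⟩ := max_reflect hdiff hxy hin (hKS a) (hMax a)
              hj1 (by omega : j ≤ a + 1)
            obtain ⟨s', hs', hr'⟩ := max_reflect hdiff hxy hin (hKS b) (hMax b)
              hj1 (by omega : j ≤ b + 1)
            have i2 : p a j = p b j := ih (by omega) j (le_refl j)
            have i1 : p a (j - 1) = p b (j - 1) := ih (by omega) (j - 1) (by omega)
            have hT : deriv σ.toFun s = deriv σ.toFun s' :=
              deriv_congr_of_eq σ (by rw [hs, hs', i2])
            rw [hr, hr', hT, i1, i2]
  -- reflection at the top vertex of the shorter path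
  obtain ⟨s, hs, hr⟩ := max_reflect hdiff hxy hin (hKS a) (hMax a)
    (by omega : 1 ≤ a + 1) (le_refl (a + 1))
  obtain ⟨s', hs', hr'⟩ := max_reflect hdiff hxy hin (hKS b) (hMax b)
    (by omega : 1 ≤ a + 1) (by omega : a + 1 ≤ b + 1)
  have hbase2 : p a (a + 1 - 1) = p b (a + 1 - 1) := hpre2 (a + 1) (le_refl _) _ (by omega)
  have hbase1 : p a (a + 1) = p b (a + 1) := hpre2 (a + 1) (le_refl _) _ (le_refl _)
  have hT : deriv σ.toFun s = deriv σ.toFun s' :=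
    deriv_congr_of_eq σ (by rw [hs, hs', hbase1])
  have hy2 : p a (a + 1 + 1) = y := KS_top (hKS a) (by omega)
  have hout : unitDir (p a (a + 1)) y = unitDir (p b (a + 1)) (p b (a + 1 + 1)) := by
    rw [← hy2, hr, hr', hT, hbase2, hbase1]
  have hPy : p a (a + 1) ≠ y := by
    rw [← hy2]
    exact max_consec_ne hxy hin (hKS a) (hMax a) (le_refl (a + 1))
  have hPB : p b (a + 1) ≠ p b (a + 1 + 1) :=
    max_consec_ne hxy hin (hKS b) (hMax b) (by omega)
  have hBeq2 : p b (a + 1 + 1)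
      = p a (a + 1) + dist (p b (a + 1)) (p b (a + 1 + 1)) • unitDir (p a (a + 1)) y := by
    have h := smul_unitDir hPB
    rw [← hout] at h
    nth_rewrite 1 [hbase1.symm] at h
    exact h
  have hyeq : y = p a (a + 1) + dist (p a (a + 1)) y • unitDir (p a (a + 1)) y :=
    smul_unitDir hPy
  have hcoll : Collinear ℝ ({p a (a + 1), p b (a + 1 + 1), y} : Set Pt) := by
    rw [collinear_iff_of_mem (Set.mem_insert _ _)]
    refine ⟨unitDir (p a (a + 1)) y, ?_⟩
    intro q hq
    rcases hq with rfl | hq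
    · exact ⟨0, by rw [zero_smul, vadd_eq_add, zero_add]⟩
    rcases hq with rfl | hq
    · refine ⟨dist (p b (a + 1)) (p b (a + 1 + 1)), ?_⟩
      rw [vadd_eq_add]
      nth_rewrite 1 [hBeq2]
      abel
    have hqy : q = y := hq
    refine ⟨dist (p a (a + 1)) y, ?_⟩
    rw [hqy, vadd_eq_add]
    nth_rewrite 1 [hyeq]
    abel
  -- both points are vertices of the given family, contradicting (NC)
  obtain ⟨i1, j1, hj11, hj12, hv1⟩ := hvert a (a + 1) (by omega) (le_refl _)
  obtain ⟨i2, j2, hj21, hj22, hv2⟩ := hvert b (a + 1 + 1) (by omega) (by omega)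
  have hne12 : (γ i1).V j1 ≠ (γ i2).V j2 := by
    rw [hv1, hv2, hbase1]
    exact hPB
  apply hNC i1 i2 j1 j2 hj11 hj12 hj21 hj22 hne12
  show Collinear ℝ ({(γ i1).V j1, (γ i2).V j2, y} : Set Pt)
  rw [hv1, hv2]
  exact hcoll

end Main
end EXNV

/-- new vertex lemma. If billiard paths `γ₁, …, γ_n` from `x` to `y`
satisfy the non-collinearity condition, then there is a billiard path from `x` to `y`
having a vertex which is not a vertex of any of `γ₁, …, γ_n`. -/
theorem exists_new_vertex
    (r : ℕ) (hr : 2 ≤ r) (σ : ClosedCurve r) (x y : Pt) (hxy : x ≠ y)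
    (hx : x ∈ interior σ.table) (hy : y ∈ interior σ.table)
    (n : ℕ) (γ : Fin n → BilliardPath σ x y)
    (hNC : NonCollinearCond y (fun i => (γ i).m) (fun i => (γ i).V)) :
    ∃ δ : BilliardPath σ x y, ∃ k : ℕ, 1 ≤ k ∧ k ≤ δ.m ∧
      ∀ i : Fin n, ¬ (γ i).IsVertex (δ.V k) := by
  classical
  have hdiff : Differentiable ℝ σ.toFun :=
    σ.contDiff.differentiable (by exact_mod_cast (by omega : r ≠ 0))
  have hin : (interior σ.table).Nonempty := ⟨x, hx⟩
  by_contra hcon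
  push_neg at hcon
  -- choose, for every number of reflections, a maximizing configuration
  choose p hKS hMax using fun m : ℕ => EXNV.exists_max σ x y (m + 1)
  -- every vertex of every maximizing path is a vertex of one of the given paths
  have hvert : ∀ m k : ℕ, 1 ≤ k → k ≤ m + 1 →
      ∃ i : Fin n, ∃ j : ℕ, 1 ≤ j ∧ j ≤ (γ i).m ∧ (γ i).V j = p m k := by
    intro m k h1 h2
    obtain ⟨i, hIV⟩ := hcon (EXNV.maxPath hdiff hxy hx hy (hKS m) (hMax m)) k h1 h2
    obtain ⟨j, hj1, hj2, hje⟩ := hIV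
    exact ⟨i, j, hj1, hj2, hje⟩
  -- the finite set of all vertices of the given paths
  set S : Set Pt := ⋃ i : Fin n, (γ i).V '' (Set.Icc 1 (γ i).m) with hS
  have hSfin : S.Finite := Set.finite_iUnion (fun i => (Set.finite_Icc _ _).image _)
  have hmemS : ∀ m : ℕ, p m 1 ∈ S := by
    intro m
    obtain ⟨i, j, hj1, hj2, hje⟩ := hvert m 1 (le_refl 1) (by omega)
    exact Set.mem_iUnion.mpr ⟨i, ⟨j, ⟨hj1, hj2⟩, hje⟩⟩
  haveI : Finite ↥S := hSfin.to_subtype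
  obtain ⟨m1, m2, hne, heq⟩ := Finite.exists_ne_map_eq_of_infinite
    (fun m : ℕ => (⟨p m 1, hmemS m⟩ : ↥S))
  have heq1 : p m1 1 = p m2 1 := congrArg Subtype.val heq
  rcases hne.lt_or_gt with hlt | hlt
  · exact EXNV.main_contra hdiff hxy hin γ hNC p hKS hMax hvert m1 m2 hlt heq1
  · exact EXNV.main_contra hdiff hxy hin γ hNC p hKS hMax hvert m2 m1 hlt heq1.symm

end
end

section
/- Let r ≥ 2, σ ∈ Σ_r, M = M(σ), and let A P A₁ be a billiard path in M with A, A₁ ∈ Int(M) and P ∈ ∂M. For any ε > 0 there exists δ > 0 such that if P̃ is a point on the segment AP or on the segment PA₁ with dist(P, P̃) < δ, then there exists σ̃ ∈ Σ_r with d_r(σ, σ̃) < ε such that A P̃ A₁ is a billiard path for the table M(σ̃). -/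
noncomputable section

open Set

/-! ### Auxiliary lemmas for the proof of `perturb_initial_segment` -/

section PerturbAux

open Filter

lemma Perturb.pt_ext {x y : Pt} (h0 : x 0 = y 0) (h1 : x 1 = y 1) : x = y := by
  ext i; fin_cases i <;> assumption

lemma Perturb.inner_two (x y : Pt) : (inner ℝ x y : ℝ) = x 0 * y 0 + x 1 * y 1 := by
  rw [PiLp.inner_apply, Fin.sum_univ_two]; simp [RCLike.inner_apply, mul_comm]

lemma Perturb.smul_app (c : ℝ) (x : Pt) (i : Fin 2) : (c • x) i = c * x i := rfl

lemma Perturb.norm_unitDir {p q : Pt} (h : q ≠ p) : ‖unitDir p q‖ = 1 := by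
  have hne : ‖q - p‖ ≠ 0 := norm_ne_zero_iff.2 (sub_ne_zero.2 h)
  rw [unitDir, norm_smul, norm_inv, norm_norm, inv_mul_cancel₀ hne]

lemma Perturb.smul_unitDir {p q : Pt} (h : q ≠ p) : dist p q • unitDir p q = q - p := by
  have hne : ‖q - p‖ ≠ 0 := norm_ne_zero_iff.2 (sub_ne_zero.2 h)
  rw [unitDir, smul_smul, dist_eq_norm, norm_sub_rev, mul_inv_cancel₀ hne, one_smul]

lemma Perturb.unitDir_eq_of_pos {p q : Pt} {u : Pt} {t : ℝ} (ht : 0 < t) (hu : ‖u‖ = 1)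
    (h : q - p = t • u) : unitDir p q = u := by
  rw [unitDir, h, norm_smul, hu, Real.norm_eq_abs, abs_of_pos ht, mul_one, smul_smul,
    inv_mul_cancel₀ ht.ne', one_smul]

lemma Perturb.unitDir_eq_of_neg {p q : Pt} {u : Pt} {t : ℝ} (ht : t < 0) (hu : ‖u‖ = 1)
    (h : q - p = t • u) : unitDir p q = -u := by
  rw [unitDir, h, norm_smul, hu, Real.norm_eq_abs, abs_of_neg ht, mul_one, smul_smul,
    show (-t)⁻¹ * t = -1 by rw [inv_neg, neg_mul, inv_mul_cancel₀ ht.ne]]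
  simp

lemma Perturb.reflect_smul (T u : Pt) {c : ℝ} (hc : c ≠ 0) :
    reflectAcross (c • T) u = reflectAcross T u := by
  by_cases hT : T = 0
  · simp [hT, reflectAcross]
  have hb : (inner ℝ T T : ℝ) ≠ 0 := inner_self_ne_zero.2 hT
  unfold reflectAcross
  rw [real_inner_smul_right, real_inner_smul_left, real_inner_smul_right, smul_smul]
  set a := (inner ℝ u T : ℝ); set b := (inner ℝ T T : ℝ)
  rw [show 2 * (c * a) / (c * (c * b)) * c = 2 * a / b by field_simp]

lemma Perturb.reflect_bisector {u v : Pt} (hu : ‖u‖ = 1) (hv : ‖v‖ = 1) (hne : u + v ≠ 0) :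
    reflectAcross (u + v) u = v := by
  have h1 : (inner ℝ u u : ℝ) = 1 := by rw [real_inner_self_eq_norm_sq, hu]; norm_num
  have h2 : (inner ℝ v v : ℝ) = 1 := by rw [real_inner_self_eq_norm_sq, hv]; norm_num
  have hT : (inner ℝ (u+v) (u+v) : ℝ) = 2 + 2 * (inner ℝ u v : ℝ) := by
    rw [real_inner_add_add_self, h1, h2]; ring
  have hTpos : (0:ℝ) < 2 + 2 * (inner ℝ u v : ℝ) := by
    rw [← hT, real_inner_self_eq_norm_sq]
    exact pow_pos (norm_pos_iff.2 hne) 2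
  have hinner : (inner ℝ u (u+v) : ℝ) = 1 + (inner ℝ u v : ℝ) := by
    rw [inner_add_right, h1]
  unfold reflectAcross
  rw [hinner, hT, show 2 * (1 + (inner ℝ u v : ℝ)) / (2 + 2 * (inner ℝ u v : ℝ)) = 1 by
    rw [div_eq_one_iff_eq hTpos.ne']; ring]
  rw [one_smul]; abel

lemma Perturb.reflect_perp {u T : Pt} (h : (inner ℝ u T : ℝ) = 0) : reflectAcross T u = -u := by
  unfold reflectAcross; rw [h]; simp

lemma Perturb.parallel_of_cross_zero {T d : Pt} (hT : T ≠ 0) (hd : d ≠ 0)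
    (h : T 0 * d 1 - T 1 * d 0 = 0) : ∃ c' : ℝ, c' ≠ 0 ∧ T = c' • d := by
  by_cases h0 : d 0 = 0
  · have h1 : d 1 ≠ 0 := fun h1 => hd (Perturb.pt_ext h0 h1)
    have hT0 : T 0 = 0 := by
      have h' := h; rw [h0] at h'; simp at h'; rcases h' with h' | h'
      · exact h'
      · exact absurd h' h1
    refine ⟨T 1 / d 1, ?_, ?_⟩
    · intro hc
      apply hT
      apply Perturb.pt_ext hT0
      have : T 1 = 0 := by field_simp at hc; simpa using hc
      simpa using this
    · apply Perturb.pt_ext <;> rw [Perturb.smul_app]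
      · rw [hT0, h0]; ring
      · field_simp
  · refine ⟨T 0 / d 0, ?_, ?_⟩
    · intro hc
      apply hT
      have hT0 : T 0 = 0 := by field_simp at hc; simpa using hc
      have : T 1 = 0 := by
        rw [hT0] at h; simp at h
        rcases h with h | h
        · exact h
        · exact absurd h h0
      exact Perturb.pt_ext hT0 this
    · apply Perturb.pt_ext <;> rw [Perturb.smul_app]
      · field_simp
      · field_simp; nlinarith [h]

lemma Perturb.iteratedDeriv_add_const (f : ℝ → Pt) (w : Pt) (j : ℕ) (hj : 1 ≤ j) :
    iteratedDeriv j (fun t => f t + w) = iteratedDeriv j f := by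
  obtain ⟨n, rfl⟩ : ∃ n, j = n + 1 := ⟨j - 1, by omega⟩
  rw [iteratedDeriv_succ', iteratedDeriv_succ']
  have hd : (deriv fun t => f t + w) = deriv f := funext fun x => deriv_add_const w
  rw [hd]

lemma Perturb.ckDist_add_const_le (k : ℕ) (f : ℝ → Pt) (w : Pt) :
    ckDist k f (fun t => f t + w) ≤ ‖w‖ := by
  have hIcc : Nonempty (Icc (0:ℝ) 1) := ⟨⟨0, by norm_num, by norm_num⟩⟩
  have hbdd : BddBelow {d : ℝ | ∃ c : ℝ, d = ⨆ j : Fin (k+1), ⨆ s : Icc (0:ℝ) 1,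
      ‖iteratedDeriv (j : ℕ) (fun t => f (t + c)) (s : ℝ)
        - iteratedDeriv (j : ℕ) (fun t => f t + w) (s : ℝ)‖} := by
    refine ⟨0, fun x hx => ?_⟩
    obtain ⟨c', hc'⟩ := hx
    rw [hc']
    exact Real.iSup_nonneg fun j => Real.iSup_nonneg fun s => norm_nonneg _
  have hmem : (⨆ j : Fin (k+1), ⨆ s : Icc (0:ℝ) 1,
      ‖iteratedDeriv (j : ℕ) (fun t => f (t + 0)) (s : ℝ)
        - iteratedDeriv (j : ℕ) (fun t => f t + w) (s : ℝ)‖) ∈ {d : ℝ | ∃ c : ℝ,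
      d = ⨆ j : Fin (k+1), ⨆ s : Icc (0:ℝ) 1,
      ‖iteratedDeriv (j : ℕ) (fun t => f (t + c)) (s : ℝ)
        - iteratedDeriv (j : ℕ) (fun t => f t + w) (s : ℝ)‖} := ⟨0, rfl⟩
  refine le_trans (csInf_le hbdd hmem) ?_
  have hf0 : (fun t => f (t + 0)) = f := funext fun t => by rw [add_zero]
  rw [hf0]
  apply ciSup_le
  intro j
  apply Real.iSup_le _ (norm_nonneg w)
  intro s
  rcases Nat.eq_zero_or_pos (j : ℕ) with hj | hj
  · rw [hj]
    simp [iteratedDeriv_zero]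
  · rw [Perturb.iteratedDeriv_add_const f w _ hj]
    simp

lemma Perturb.sign_change_of_deriv_neg {f : ℝ → ℝ} {s₀ κ : ℝ} (hf : HasDerivAt f (-κ) s₀)
    (h0 : f s₀ = 0) (hκ : 0 < κ) {ηm : ℝ} (hηm : 0 < ηm) :
    ∃ η : ℝ, 0 < η ∧ η ≤ ηm ∧ 0 < f (s₀ - η) ∧ f (s₀ + η) < 0 := by
  have hslope := hasDerivAt_iff_tendsto_slope.mp hf
  have hev : ∀ᶠ s in nhdsWithin s₀ {s₀}ᶜ, slope f s₀ s < 0 :=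
    hslope.eventually_lt_const (by linarith)
  rw [eventually_nhdsWithin_iff, Metric.eventually_nhds_iff] at hev
  obtain ⟨ρ, hρ, hball⟩ := hev
  set η := min (ρ/2) ηm with hη
  have hηpos : 0 < η := lt_min (by linarith) hηm
  have hηρ : η < ρ := lt_of_le_of_lt (min_le_left _ _) (by linarith)
  have h1 : slope f s₀ (s₀ - η) < 0 := by
    apply hball
    · rw [Real.dist_eq, show s₀ - η - s₀ = -η by ring, abs_neg, abs_of_pos hηpos]; exact hηρ
    · simp only [Set.mem_compl_iff, Set.mem_singleton_iff]
      intro h; nlinarith [sub_eq_self.mp h]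
  have h2 : slope f s₀ (s₀ + η) < 0 := by
    apply hball
    · rw [Real.dist_eq, show s₀ + η - s₀ = η by ring, abs_of_pos hηpos]; exact hηρ
    · simp only [Set.mem_compl_iff, Set.mem_singleton_iff]
      intro h; nlinarith [add_eq_left.mp h]
  rw [slope_def_field, h0] at h1 h2
  refine ⟨η, hηpos, min_le_right _ _, ?_, ?_⟩
  · rw [div_neg_iff] at h1
    rcases h1 with ⟨_, h⟩ | ⟨h, _⟩ <;> nlinarith
  · rw [div_neg_iff] at h2
    rcases h2 with ⟨_, h⟩ | ⟨h, _⟩ <;> nlinarith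

end PerturbAux

set_option maxHeartbeats 2000000

/-- perturbing an initial segment. Given a billiard path `A P A₁` with
`A, A₁ ∈ Int M` and `P ∈ ∂M`, for every `ε > 0` there is `δ > 0` such that for every
point `P'` on segment `AP` or `PA₁` with `dist P P' < δ`, there is `σ' ∈ Σ_r` with
`d_r(σ, σ') < ε` for which `A P' A₁` is a billiard path. -/
theorem perturb_initial_segment
    (r : ℕ) (hr : 2 ≤ r) (σ : ClosedCurve r) (A A₁ : Pt)
    (hA : A ∈ interior σ.table) (hA₁ : A₁ ∈ interior σ.table)
    (γ : BilliardPath σ A A₁) (hm : γ.m = 1) (P : Pt) (hP : γ.V 1 = P)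
    (ε : ℝ) (hε : 0 < ε) :
    ∃ δ > (0:ℝ), ∀ P' : Pt, P' ∈ segment ℝ A P ∪ segment ℝ P A₁ → dist P P' < δ →
      ∃ σ' : ClosedCurve r, ckDist r σ.toFun σ'.toFun < ε ∧
        ∃ γ' : BilliardPath σ' A A₁, γ'.m = 1 ∧ γ'.V 1 = P' := by
  classical
  obtain ⟨c, hc, hspeed⟩ := σ.constSpeed
  have hA0 : γ.V 0 = A := γ.head_eq
  have hA2 : γ.V 2 = A₁ := by have h := γ.last_eq; rw [hm] at h; exact h
  obtain ⟨s₀, hs₀, hrefl₀⟩ := γ.reflect 1 le_rfl (by rw [hm])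
  rw [hP] at hs₀
  have hAP : A ≠ P := by
    have h : γ.V 0 ≠ γ.V 1 := γ.consec_ne 0 (by omega)
    rw [hA0, hP] at h; exact h
  have hPA : P ≠ A₁ := by
    have h : γ.V 1 ≠ γ.V 2 := γ.consec_ne 1 (by rw [hm])
    rw [hP, hA2] at h; exact h
  have hrefl : unitDir P A₁ = reflectAcross (deriv σ.toFun s₀) (unitDir A P) := by
    have h : unitDir (γ.V 1) (γ.V 2) =
        reflectAcross (deriv σ.toFun s₀) (unitDir (γ.V 0) (γ.V 1)) := hrefl₀
    rw [hA0, hA2, hP] at h; exact h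
  set u := unitDir A P with hu_def
  set v := unitDir P A₁ with hv_def
  have hu1 : ‖u‖ = 1 := Perturb.norm_unitDir hAP.symm
  have hv1 : ‖v‖ = 1 := Perturb.norm_unitDir hPA.symm
  set T₀ := deriv σ.toFun s₀ with hT₀def
  have hT₀norm : ‖T₀‖ = c := hspeed s₀
  have hT₀ : T₀ ≠ 0 := by
    intro h; rw [h, norm_zero] at hT₀norm; exact hc.ne hT₀norm
  set dA := dist A P with hdA_def
  set dB := dist P A₁ with hdB_def
  have hdA : 0 < dA := dist_pos.2 hAP
  have hdB : 0 < dB := dist_pos.2 hPA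
  obtain ⟨ρA, hρA, hballA⟩ : ∃ ρ > 0, Metric.ball A ρ ⊆ σ.table := by
    rw [mem_interior_iff_mem_nhds, Metric.mem_nhds_iff] at hA; exact hA
  obtain ⟨ρB, hρB, hballB⟩ : ∃ ρ > 0, Metric.ball A₁ ρ ⊆ σ.table := by
    rw [mem_interior_iff_mem_nhds, Metric.mem_nhds_iff] at hA₁; exact hA₁
  have hC2 : ContDiff ℝ ((1:ℕ∞)+1) σ.toFun := σ.contDiff.of_le (by exact_mod_cast hr)
  rw [contDiff_succ_iff_deriv] at hC2
  have hd1cont : Continuous (deriv σ.toFun) := hC2.2.2.continuous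
  have hd1diff : Differentiable ℝ (deriv σ.toFun) := hC2.2.2.differentiable (by norm_num)
  have hσcont : Continuous σ.toFun := hC2.1.continuous
  -- the cross-product function
  set G : Pt → ℝ → ℝ := fun d s => deriv σ.toFun s 0 * d 1 - deriv σ.toFun s 1 * d 0
    with hG_def
  have hGcont : ∀ d : Pt, Continuous (fun s => G d s) := by
    intro d
    apply Continuous.sub
    · exact ((EuclideanSpace.proj (0 : Fin 2)).continuous.comp hd1cont).mul continuous_const
    · exact ((EuclideanSpace.proj (1 : Fin 2)).continuous.comp hd1cont).mul continuous_const
  set D2 := deriv (deriv σ.toFun) s₀ with hD2_def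
  set κ := T₀ 0 * D2 1 - T₀ 1 * D2 0 with hκ_def
  have hκ : 0 < κ := σ.posCurv s₀
  set hfun : ℝ → ℝ := fun s => G T₀ s with hfun_def
  have hfun0 : hfun s₀ = 0 := by simp only [hfun_def, hG_def]; ring
  have hfunderiv : HasDerivAt hfun (-κ) s₀ := by
    have h1 : HasDerivAt (deriv σ.toFun) D2 s₀ := (hd1diff s₀).hasDerivAt
    have h10 : HasDerivAt (fun s => deriv σ.toFun s 0) (D2 0) s₀ := by
      exact (EuclideanSpace.proj (0 : Fin 2)).hasFDerivAt.comp_hasDerivAt s₀ h1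
    have h11 : HasDerivAt (fun s => deriv σ.toFun s 1) (D2 1) s₀ := by
      exact (EuclideanSpace.proj (1 : Fin 2)).hasFDerivAt.comp_hasDerivAt s₀ h1
    have h2 := (h10.mul_const (T₀ 1)).sub (h11.mul_const (T₀ 0))
    refine h2.congr_deriv ?_
    rw [hκ_def]; ring
  set ε₁ := min ε (min ρA ρB) / 2 with hε₁_def
  have hε₁ : 0 < ε₁ := by
    apply div_pos _ two_pos
    exact lt_min hε (lt_min hρA hρB)
  obtain ⟨η₂, hη₂, hcont₂⟩ := Metric.continuous_iff.mp hσcont s₀ ε₁ hε₁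
  obtain ⟨η, hηpos, hηle, hα, hβ⟩ :=
    Perturb.sign_change_of_deriv_neg hfunderiv hfun0 hκ (half_pos hη₂)
  have hσclose : ∀ s ∈ Icc (s₀ - η) (s₀ + η), dist (σ.toFun s) P < ε₁ := by
    intro s hs
    have h1 : dist s s₀ < η₂ := by
      rw [Real.dist_eq]
      have h2 : |s - s₀| ≤ η := abs_le.mpr ⟨by linarith [hs.1], by linarith [hs.2]⟩
      linarith
    have h3 := hcont₂ s h1
    rwa [hs₀] at h3
  -- key IVT step
  have key : ∀ d : Pt, d ≠ 0 → G d (s₀ - η) * G d (s₀ + η) < 0 →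
      ∃ s ∈ Icc (s₀ - η) (s₀ + η), ∃ c' : ℝ, c' ≠ 0 ∧ deriv σ.toFun s = c' • d := by
    intro d hd hsign
    have hab : s₀ - η ≤ s₀ + η := by linarith
    have hmem : (0:ℝ) ∈ (fun s => G d s) '' Icc (s₀ - η) (s₀ + η) := by
      rcases mul_neg_iff.mp hsign with ⟨h1, h2⟩ | ⟨h1, h2⟩
      · exact intermediate_value_Icc' hab (hGcont d).continuousOn ⟨le_of_lt h2, le_of_lt h1⟩
      · exact intermediate_value_Icc hab (hGcont d).continuousOn ⟨le_of_lt h1, le_of_lt h2⟩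
    obtain ⟨s, hsmem, hs0⟩ := hmem
    simp only [hG_def] at hs0
    have hTs : deriv σ.toFun s ≠ 0 := by
      intro h
      have h2 := hspeed s; rw [h, norm_zero] at h2; exact hc.ne h2
    obtain ⟨c', hc', hpar⟩ := Perturb.parallel_of_cross_zero hTs hd hs0
    exact ⟨s, hsmem, c', hc', hpar⟩
  -- construction of the perturbed curve and billiard path
  have build : ∀ (P' : Pt) (s : ℝ), s ∈ Icc (s₀ - η) (s₀ + η) → dist P P' < ε₁ →
      A ≠ P' → P' ≠ A₁ →
      unitDir P' A₁ = reflectAcross (deriv σ.toFun s) (unitDir A P') →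
      ∃ σ' : ClosedCurve r, ckDist r σ.toFun σ'.toFun < ε ∧
        ∃ γ' : BilliardPath σ' A A₁, γ'.m = 1 ∧ γ'.V 1 = P' := by
    intro P' s hsmem hdist hnA hnB hreflP'
    set w := P' - σ.toFun s with hw_def
    have hwnorm : ‖w‖ < min ε (min ρA ρB) := by
      have h1 : ‖P' - P‖ < ε₁ := by rw [← dist_eq_norm, dist_comm]; exact hdist
      have h2 : ‖P - σ.toFun s‖ < ε₁ := by
        rw [← dist_eq_norm, dist_comm]; exact hσclose s hsmem
      calc ‖w‖ = ‖(P' - P) + (P - σ.toFun s)‖ := by rw [hw_def]; congr 1; abel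
        _ ≤ ‖P' - P‖ + ‖P - σ.toFun s‖ := norm_add_le _ _
        _ < ε₁ + ε₁ := by linarith
        _ = min ε (min ρA ρB) := by rw [hε₁_def]; ring
    have hderiv_eq : ∀ t : ℝ, deriv (fun t => σ.toFun t + w) t = deriv σ.toFun t :=
      fun t => deriv_add_const w
    have hderiv_fun : (deriv fun t => σ.toFun t + w) = deriv σ.toFun := funext hderiv_eq
    set σ' : ClosedCurve r :=
      { toFun := fun t => σ.toFun t + w
        contDiff := σ.contDiff.add contDiff_const
        periodic := fun t => by simp only []; rw [σ.periodic t]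
        inj := fun s₁ t₁ hs₁ ht₁ heq => σ.inj hs₁ ht₁ (by exact add_right_cancel heq)
        constSpeed := ⟨c, hc, fun t => by rw [hderiv_fun]; exact hspeed t⟩
        posCurv := fun t => by rw [hderiv_fun]; exact σ.posCurv t } with hσ'_def
    have hck : ckDist r σ.toFun σ'.toFun < ε :=
      lt_of_le_of_lt (Perturb.ckDist_add_const_le r σ.toFun w)
        (lt_of_lt_of_le hwnorm (min_le_left _ _))
    have hP'bd : P' ∈ σ'.boundary := ⟨s, by show σ.toFun s + w = P'; rw [hw_def]; abel⟩
    have hbd : σ'.boundary = (fun x => x + w) '' σ.boundary := by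
      unfold ClosedCurve.boundary
      ext p
      constructor
      · rintro ⟨t, rfl⟩; exact ⟨σ.toFun t, ⟨t, rfl⟩, rfl⟩
      · rintro ⟨q, ⟨t, rfl⟩, rfl⟩; exact ⟨t, rfl⟩
    have htable : σ'.table = (fun x : Pt => x + w) '' σ.table := by
      unfold ClosedCurve.table
      rw [hbd]
      have hfun2 : (fun x : Pt => x + w) = ⇑((AffineEquiv.constVAdd ℝ Pt w).toAffineMap) :=
        funext fun x => by simp [add_comm]
      rw [hfun2]
      exact (AffineMap.image_convexHull _ _).symm
    have hAmem : A ∈ σ'.table := by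
      rw [htable]
      refine ⟨A - w, hballA ?_, by show A - w + w = A; abel⟩
      rw [Metric.mem_ball, dist_eq_norm]
      rw [show A - w - A = -w by abel, norm_neg]
      exact lt_of_lt_of_le hwnorm (le_trans (min_le_right _ _) (min_le_left _ _))
    have hBmem : A₁ ∈ σ'.table := by
      rw [htable]
      refine ⟨A₁ - w, hballB ?_, by show A₁ - w + w = A₁; abel⟩
      rw [Metric.mem_ball, dist_eq_norm]
      rw [show A₁ - w - A₁ = -w by abel, norm_neg]
      exact lt_of_lt_of_le hwnorm (le_trans (min_le_right _ _) (min_le_right _ _))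
    have hP'mem : P' ∈ σ'.table := subset_convexHull ℝ _ hP'bd
    refine ⟨σ', hck, ⟨1, fun i => if i = 0 then A else if i = 1 then P' else A₁,
      rfl, by norm_num, ?_, ?_, ?_, ?_⟩, rfl, rfl⟩
    · -- consec_ne
      intro i hi
      interval_cases i
      · simpa using hnA
      · simpa using hnB
    · -- vertex_mem
      intro i h1 h2
      have h3 : i = 1 := le_antisymm h2 h1
      subst h3
      simpa using hP'bd
    · -- seg_sub
      intro i hi
      interval_cases i
      · simpa [ClosedCurve.table] using (convex_convexHull ℝ _).segment_subset hAmem hP'mem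
      · simpa [ClosedCurve.table] using (convex_convexHull ℝ _).segment_subset hP'mem hBmem
    · -- reflect
      intro i h1 h2
      have h3 : i = 1 := le_antisymm h2 h1
      subst h3
      refine ⟨s, by simpa using (show σ.toFun s + w = P' by rw [hw_def]; abel), ?_⟩
      have hd' : deriv σ'.toFun s = deriv σ.toFun s := hderiv_eq s
      simpa [hd'] using hreflP'
  -- the bisector identity  u + v = μ • T₀
  clear_value u v G hfun T₀ D2 κ ε₁ dA dB
  have hUV : u + v = (2 * (inner ℝ u T₀ : ℝ) / (inner ℝ T₀ T₀ : ℝ)) • T₀ := by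
    have h := hrefl
    unfold reflectAcross at h
    rw [h]
    abel
  by_cases hdeg : u + v = 0
  · -- degenerate case : normal incidence, A, P, A₁ collinear
    have hbT₀ : (inner ℝ T₀ T₀ : ℝ) ≠ 0 := inner_self_ne_zero.2 hT₀
    have hperp : (inner ℝ u T₀ : ℝ) = 0 := by
      rw [hdeg] at hUV
      have h1 := (smul_eq_zero.mp hUV.symm).resolve_right hT₀
      rw [div_eq_zero_iff] at h1
      rcases h1 with h1 | h1
      · linarith
      · exact absurd h1 hbT₀
    have hvu : v = -u := by rw [← zero_sub, ← hdeg]; abel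
    set d := rot90 u with hd_def
    have hune : u ≠ 0 := by
      intro h; rw [h, norm_zero] at hu1; exact one_ne_zero hu1.symm
    have hd : d ≠ 0 := by
      intro h
      apply hune
      apply Perturb.pt_ext
      · have h1 : d 1 = (0:Pt) 1 := by rw [h]
        simpa [hd_def, rot90] using h1
      · have h0 : d 0 = (0:Pt) 0 := by rw [h]
        have h0' : -(u 1) = 0 := h0
        simpa using neg_eq_zero.mp h0'
    have hcross : T₀ 0 * d 1 - T₀ 1 * d 0 = 0 := by
      have h := hperp
      rw [Perturb.inner_two] at h
      show T₀ 0 * u 0 - T₀ 1 * (-(u 1)) = 0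
      linear_combination h
    obtain ⟨μ, hμ, hTd⟩ := Perturb.parallel_of_cross_zero hT₀ hd hcross
    have hsign : G d (s₀ - η) * G d (s₀ + η) < 0 := by
      have hr1 : ∀ s, hfun s = μ * G d s := by
        intro s
        simp only [hfun_def, hG_def, hTd, Perturb.smul_app]
        ring
      have h1 : 0 < μ * G d (s₀ - η) := by rw [← hr1]; exact hα
      have h2 : μ * G d (s₀ + η) < 0 := by rw [← hr1]; exact hβ
      have hμ2 : 0 < μ^2 := by rcases lt_or_gt_of_ne hμ with hx | hx <;> nlinarith
      nlinarith [mul_neg_of_pos_of_neg h1 h2]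
    obtain ⟨s, hsmem, c', hc', hpar⟩ := key d hd hsign
    refine ⟨min (min dA dB / 2) ε₁, lt_min (div_pos (lt_min hdA hdB) two_pos) hε₁, ?_⟩
    intro P' hmemP' hdistP'
    have hdist₁ : dist P P' < ε₁ := lt_of_lt_of_le hdistP' (min_le_right _ _)
    have hdistd : dist P P' < min dA dB / 2 := lt_of_lt_of_le hdistP' (min_le_left _ _)
    have hnA : A ≠ P' := by
      intro he
      rw [← he, dist_comm P A] at hdistd
      have h2 : min dA dB ≤ dA := min_le_left _ _
      have h3 : dist A P < min dA dB / 2 := hdistd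
      rw [← hdA_def] at h3
      linarith
    have hnB : P' ≠ A₁ := by
      intro he
      rw [he] at hdistd
      have h2 : min dA dB ≤ dB := min_le_right _ _
      have h3 : dist P A₁ < min dA dB / 2 := hdistd
      rw [← hdB_def] at h3
      linarith
    have hPA_eq : P - A = dA • u := by
      rw [hdA_def, hu_def]
      exact (Perturb.smul_unitDir (Ne.symm hAP)).symm
    have hA1P : A₁ - P = -(dB • u) := by
      rw [hdB_def]
      have h := Perturb.smul_unitDir (Ne.symm hPA)
      rw [← h, ← hv_def, hvu, smul_neg]
    obtain ⟨t, ht0, hteq⟩ : ∃ t : ℝ, 0 ≤ t ∧ P' = P - t • u := by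
      rcases hmemP' with hseg | hseg
      · obtain ⟨a, b, ha, hb, hab, hP'⟩ := hseg
        refine ⟨a * dA, mul_nonneg ha hdA.le, ?_⟩
        have hA_eq : A = P - dA • u := by rw [← hPA_eq]; abel
        rw [← hP', hA_eq]
        obtain rfl : b = 1 - a := by linarith
        module
      · obtain ⟨a, b, ha, hb, hab, hP'⟩ := hseg
        refine ⟨b * dB, mul_nonneg hb hdB.le, ?_⟩
        have hA1_eq : A₁ = P - dB • u := by
          rw [show P - dB • u = P + -(dB • u) by abel, ← hA1P]; abel
        rw [← hP', hA1_eq]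
        obtain rfl : a = 1 - b := by linarith
        module
    have hdt : dist P P' = t := by
      rw [hteq, dist_eq_norm, show P - (P - t • u) = t • u by abel, norm_smul, hu1,
        Real.norm_eq_abs, abs_of_nonneg ht0, mul_one]
    have htdA : t < dA := by
      rw [hdt] at hdistd
      have h2 : min dA dB ≤ dA := min_le_left _ _
      linarith
    have htdB : t < dB := by
      rw [hdt] at hdistd
      have h2 : min dA dB ≤ dB := min_le_right _ _
      linarith
    have hu' : unitDir A P' = u := by
      apply Perturb.unitDir_eq_of_pos (t := dA - t) (by linarith) hu1
      rw [hteq, show P - t • u - A = (P - A) - t • u by abel, hPA_eq]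
      module
    have hv' : unitDir P' A₁ = -u := by
      apply Perturb.unitDir_eq_of_neg (t := t - dB) (by linarith) hu1
      rw [hteq, show A₁ - (P - t • u) = (A₁ - P) + t • u by abel, hA1P]
      module
    apply build P' s hsmem hdist₁ hnA hnB
    have hperp2 : (inner ℝ u d : ℝ) = 0 := by
      rw [Perturb.inner_two]
      show u 0 * (-(u 1)) + u 1 * (u 0) = 0
      ring
    rw [hv', hu', hpar, Perturb.reflect_smul d u hc', Perturb.reflect_perp hperp2]
  · -- non-degenerate case
    have hμ0 : (2 * (inner ℝ u T₀ : ℝ) / (inner ℝ T₀ T₀ : ℝ)) ≠ 0 := by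
      intro h; apply hdeg; rw [hUV, h, zero_smul]
    set μ := 2 * (inner ℝ u T₀ : ℝ) / (inner ℝ T₀ T₀ : ℝ) with hμ_def
    have hPnA : (P - A) ≠ 0 := sub_ne_zero.2 hAP.symm
    have hA1nP : (A₁ - P) ≠ 0 := sub_ne_zero.2 (Ne.symm hPA)
    have hcontA : ContinuousAt (fun Q : Pt => unitDir A Q) P := by
      simp only [unitDir]
      have hsub : ContinuousAt (fun Q : Pt => Q - A) P :=
        (continuous_id.sub continuous_const).continuousAt
      exact (hsub.norm.inv₀ (norm_ne_zero_iff.2 hPnA)).smul hsub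
    have hcontB : ContinuousAt (fun Q : Pt => unitDir Q A₁) P := by
      simp only [unitDir]
      have hsub : ContinuousAt (fun Q : Pt => A₁ - Q) P :=
        (continuous_const.sub continuous_id).continuousAt
      exact (hsub.norm.inv₀ (norm_ne_zero_iff.2 hA1nP)).smul hsub
    set dfun : Pt → Pt := fun Q => unitDir A Q + unitDir Q A₁ with hdfun_def
    have hcontd : ContinuousAt dfun P := hcontA.add hcontB
    have hdfunP : dfun P = μ • T₀ := by
      show unitDir A P + unitDir P A₁ = μ • T₀
      rw [← hu_def, ← hv_def]
      exact hUV
    have hcontΦ : ∀ s' : ℝ, ContinuousAt (fun Q => G (dfun Q) s') P := by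
      intro s'
      simp only [hG_def]
      apply ContinuousAt.sub
      · exact continuousAt_const.mul
          (((EuclideanSpace.proj (1 : Fin 2)).continuous.continuousAt).comp hcontd)
      · exact continuousAt_const.mul
          (((EuclideanSpace.proj (0 : Fin 2)).continuous.continuousAt).comp hcontd)
    have hGμ : ∀ s', G (μ • T₀) s' = μ * hfun s' := by
      intro s'; simp only [hG_def, hfun_def, Perturb.smul_app]; ring
    have hvalΦ : G (dfun P) (s₀ - η) * G (dfun P) (s₀ + η) < 0 := by
      rw [hdfunP, hGμ, hGμ]
      have hμ2 : 0 < μ^2 := by rcases lt_or_gt_of_ne hμ0 with hx | hx <;> nlinarith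
      nlinarith [mul_pos hα (neg_pos.2 hβ)]
    have hev1 : ∀ᶠ Q in nhds P, G (dfun Q) (s₀ - η) * G (dfun Q) (s₀ + η) < 0 :=
      Filter.Tendsto.eventually_lt_const hvalΦ ((hcontΦ (s₀ - η)).mul (hcontΦ (s₀ + η)))
    have hev2 : ∀ᶠ Q in nhds P, dfun Q ≠ 0 := by
      have hnormpos : 0 < ‖dfun P‖ := by
        rw [hdfunP]; exact norm_pos_iff.2 (smul_ne_zero hμ0 hT₀)
      refine (Filter.Tendsto.eventually_const_lt hnormpos hcontd.norm).mono ?_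
      intro Q hQ h0
      rw [h0, norm_zero] at hQ
      exact lt_irrefl 0 hQ
    obtain ⟨δ₁, hδ₁, hδball⟩ := Metric.eventually_nhds_iff.mp (hev1.and hev2)
    refine ⟨min δ₁ (min (min dA dB / 2) ε₁),
      lt_min hδ₁ (lt_min (div_pos (lt_min hdA hdB) two_pos) hε₁), ?_⟩
    intro P' hmemP' hdistP'
    obtain ⟨hsign', hdne⟩ := hδball
      (show dist P' P < δ₁ by rw [dist_comm]; exact lt_of_lt_of_le hdistP' (min_le_left _ _))
    have hdist₁ : dist P P' < ε₁ :=
      lt_of_lt_of_le hdistP' (le_trans (min_le_right _ _) (min_le_right _ _))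
    have hdistd : dist P P' < min dA dB / 2 :=
      lt_of_lt_of_le hdistP' (le_trans (min_le_right _ _) (min_le_left _ _))
    have hnA : A ≠ P' := by
      intro he
      rw [← he, dist_comm P A] at hdistd
      have h2 : min dA dB ≤ dA := min_le_left _ _
      have h3 : dist A P < min dA dB / 2 := hdistd
      rw [← hdA_def] at h3
      linarith
    have hnB : P' ≠ A₁ := by
      intro he
      rw [he] at hdistd
      have h2 : min dA dB ≤ dB := min_le_right _ _
      have h3 : dist P A₁ < min dA dB / 2 := hdistd
      rw [← hdB_def] at h3
      linarith
    obtain ⟨s, hsmem, c', hc', hpar⟩ := key (dfun P') hdne hsign'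
    apply build P' s hsmem hdist₁ hnA hnB
    have hu'1 : ‖unitDir A P'‖ = 1 := Perturb.norm_unitDir (Ne.symm hnA)
    have hv'1 : ‖unitDir P' A₁‖ = 1 := Perturb.norm_unitDir (Ne.symm hnB)
    rw [hpar, Perturb.reflect_smul _ _ hc']
    rw [show dfun P' = unitDir A P' + unitDir P' A₁ from rfl] at hdne ⊢
    exact (Perturb.reflect_bisector hu'1 hv'1 hdne).symm


end
end
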